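/- arXiv:1901.09797 — 7 statements merged into one kernel-verified Lean document; each statement's English description precedes it below -/
import Mathlib

section
/- Let U be a p×n integer matrix of rank r and F a p×r integer matrix whose columns generate a submodule containing the column span (over ℤ) of U, so that there is a unique r×n integer matrix V with U = FV. Then the columns of F form a ℤ-basis of the ℤ-module generated by the columns of U if and only if the rows of V form a ℤ-basis of the lattice ℝ-span(rows of U) ∩ ℤⁿ. -/
open Matrix

def colSpanZ {p n : ℕ} (U : Matrix (Fin p) (Fin n) ℤ) : Submodule ℤ (Fin p → ℤ) :=
  Submodule.span ℤ (Set.range fun j => fun i => U i j)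

def colSpanR {p n : ℕ} (U : Matrix (Fin p) (Fin n) ℤ) : Submodule ℝ (Fin p → ℝ) :=
  Submodule.span ℝ (Set.range fun j => fun i => (U i j : ℝ))

noncomputable def castLM (m : ℕ) : (Fin m → ℤ) →ₗ[ℤ] (Fin m → ℝ) :=
  LinearMap.pi fun i => (Algebra.linearMap ℤ ℝ).comp (LinearMap.proj i)

noncomputable def satOf {m : ℕ} (S : Submodule ℝ (Fin m → ℝ)) : Submodule ℤ (Fin m → ℤ) :=
  (S.restrictScalars ℤ).comap (castLM m)

def IsZBasis {ι V : Type*} [AddCommGroup V] [Module ℤ V] (f : ι → V) (L : Submodule ℤ V) : Prop :=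
  LinearIndependent ℤ f ∧ Submodule.span ℤ (Set.range f) = L

noncomputable def gramDet {p n : ℕ} (A : Matrix (Fin p) (Fin n) ℝ) (I : Finset (Fin n)) : ℝ :=
  ((A.submatrix id (fun j : ↥I => (j : Fin n)))ᵀ * A.submatrix id (fun j : ↥I => (j : Fin n))).det

noncomputable def covol {r q : ℕ} (f : Fin r → Fin q → ℝ) : ℝ :=
  Real.sqrt (Matrix.of fun a b => ∑ i, f a i * f b i).det

def rowSpanR {p n : ℕ} (U : Matrix (Fin p) (Fin n) ℤ) : Submodule ℝ (Fin n → ℝ) :=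
  Submodule.span ℝ (Set.range fun i => fun j => (U i j : ℝ))

section Auxiliary

open Submodule

lemma castLM_apply' {m : ℕ} (x : Fin m → ℤ) : castLM m x = fun i => (x i : ℝ) := rfl

lemma cols_linIndep_of_rank {a b : ℕ} (A : Matrix (Fin a) (Fin b) ℝ) (h : A.rank = b) :
    LinearIndependent ℝ (fun j => fun i => A i j) := by
  have : (fun j => fun i => A i j) = A.col := rfl
  rw [this, linearIndependent_iff_card_eq_finrank_span]
  rw [Set.finrank, ← Matrix.rank_eq_finrank_span_cols, h, Fintype.card_fin]

lemma zIndep_of_cast {m : ℕ} {ι : Type*} {v : ι → Fin m → ℤ}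
    (h : LinearIndependent ℝ (fun i => fun j => ((v i j : ℝ)))) :
    LinearIndependent ℤ v := by
  have h2 : LinearIndependent ℤ (castLM m ∘ v) := by
    refine h.restrict_scalars ?_
    intro x y hxy
    simpa using hxy
  exact h2.of_comp (castLM m)

lemma coe_sum_circ {ι : Type*} (s : Finset ι) (f : ι → ℚ) :
    ((∑ i ∈ s, f i : ℚ) : AddCircle (1:ℚ)) = ∑ i ∈ s, (f i : AddCircle (1:ℚ)) :=
  map_sum (QuotientAddGroup.mk' _) f s

lemma core_saturation {r n : ℕ} (V : Matrix (Fin r) (Fin n) ℤ)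
    (hind : LinearIndependent ℝ (fun i => fun j => (V i j : ℝ))) :
    colSpanZ V = ⊤ ↔ satOf (rowSpanR V) ≤ span ℤ (Set.range fun i => V i) := by
  constructor
  · -- surjective ⇒ saturated
    intro h
    have hW : ∀ k : Fin r, ∃ x : Fin n → ℤ, ∑ j, x j • (fun i => V i j) = Pi.single k 1 := by
      intro k
      have : (Pi.single k 1 : Fin r → ℤ) ∈ colSpanZ V := h ▸ mem_top
      exact (mem_span_range_iff_exists_fun ℤ).1 this
    choose W hWc using hW
    intro b hb
    have hb' : (fun j => (b j : ℝ)) ∈ rowSpanR V := hb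
    obtain ⟨c, hc⟩ := (mem_span_range_iff_exists_fun ℝ).1 hb'
    have h1 : ∀ j, (b j : ℝ) = ∑ i, c i * (V i j : ℝ) := by
      intro j
      have := congrFun hc j
      simpa [Finset.sum_apply] using this.symm
    have hck : ∀ k, c k = (↑(∑ j, b j * W k j) : ℝ) := by
      intro k
      have h2 : ∀ i, ((∑ j, W k j * V i j : ℤ) : ℝ) = (if i = k then 1 else 0 : ℝ) := by
        intro i
        have := congrFun (hWc k) i
        simp only [Finset.sum_apply, Pi.smul_apply, smul_eq_mul, Pi.single_apply] at this
        rw [this]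
        split <;> simp
      push_cast
      symm
      calc (∑ j, (b j : ℝ) * W k j)
          = ∑ j, (∑ i, c i * (V i j : ℝ)) * W k j := by
            refine Finset.sum_congr rfl fun j _ => by rw [← h1 j]
        _ = ∑ i, c i * ∑ j, (W k j : ℝ) * V i j := by
            simp only [Finset.sum_mul]
            rw [Finset.sum_comm]
            refine Finset.sum_congr rfl fun i _ => ?_
            rw [Finset.mul_sum]
            exact Finset.sum_congr rfl fun j _ => by ring
        _ = c k := by
            have h3 : ∀ i, c i * ∑ j, (W k j : ℝ) * (V i j : ℝ)
                = c i * (if i = k then 1 else 0) := by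
              intro i
              rw [show ∑ j, (W k j : ℝ) * (V i j : ℝ) = ((∑ j, W k j * V i j : ℤ) : ℝ) by
                push_cast; rfl, h2 i]
            simp only [h3, mul_ite, mul_one, mul_zero]
            simp
    refine (mem_span_range_iff_exists_fun ℤ).2 ⟨fun k => ∑ j, b j * W k j, ?_⟩
    funext j
    have key : ((∑ k, (∑ j', b j' * W k j') • V k j : ℤ) : ℝ) = ((b j : ℤ) : ℝ) := by
      rw [h1 j]
      push_cast [smul_eq_mul]
      refine Finset.sum_congr rfl fun k _ => ?_
      rw [hck k]; push_cast; ring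
    have := Int.cast_injective (α := ℝ) key
    simpa [Finset.sum_apply, smul_eq_mul] using this
  · -- saturated ⇒ surjective
    intro hsat
    by_contra hne
    have hlt : colSpanZ V < ⊤ := lt_of_le_of_ne le_top hne
    obtain ⟨a, -, ha⟩ := SetLike.exists_of_lt hlt
    obtain ⟨c, hc⟩ := CharacterModule.exists_character_apply_ne_zero_of_ne_zero
      (a := Submodule.Quotient.mk (p := colSpanZ V) a)
      (by simpa [Submodule.Quotient.mk_eq_zero] using ha)
    set φ : (Fin r → ℤ) →+ AddCircle (1 : ℚ) :=
      c.comp ((colSpanZ V).mkQ).toAddMonoidHom with hφ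
    have hφ0 : ∀ x ∈ colSpanZ V, φ x = 0 := by
      intro x hx
      rw [hφ]; show c ((colSpanZ V).mkQ x) = 0
      rw [Submodule.mkQ_apply, (Submodule.Quotient.mk_eq_zero _).2 hx, map_zero]
    have hsurj : ∀ i : Fin r, ∃ q : ℚ, (q : AddCircle (1:ℚ)) = φ (Pi.single i 1) := by
      intro i
      obtain ⟨q, hq⟩ := QuotientAddGroup.mk'_surjective _ (φ (Pi.single i 1))
      exact ⟨q, hq⟩
    choose q hq using hsurj
    have hkey : ∀ x : Fin r → ℤ, φ x = ((∑ i, (x i : ℚ) * q i : ℚ) : AddCircle (1:ℚ)) := by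
      intro x
      have hx : x = ∑ i, x i • Pi.single i (1:ℤ) := by
        funext k; simp [Finset.sum_apply, Pi.single_apply]
      rw [coe_sum_circ]
      conv_lhs => rw [hx]
      rw [map_sum]
      refine Finset.sum_congr rfl fun i _ => ?_
      rw [map_zsmul, ← hq i, ← AddCircle.coe_zsmul]
      rw [zsmul_eq_mul]
    -- each column of V is killed by φ, producing an integer vector b
    have hcol : ∀ j : Fin n, ∃ m : ℤ, (m : ℚ) = ∑ i, (V i j : ℚ) * q i := by
      intro j
      have hmem : (fun i => V i j) ∈ colSpanZ V :=
        subset_span ⟨j, rfl⟩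
      have := hφ0 _ hmem
      rw [hkey] at this
      obtain ⟨m, hm⟩ := (AddCircle.coe_eq_zero_iff _).1 this
      exact ⟨m, by simpa using hm⟩
    choose b hbdef using hcol
    have hbmem : b ∈ satOf (rowSpanR V) := by
      show castLM n b ∈ (rowSpanR V).restrictScalars ℤ
      rw [castLM_apply']
      have : (fun j => (b j : ℝ)) = ∑ i, ((q i : ℝ)) • (fun j => (V i j : ℝ)) := by
        funext j
        have := hbdef j
        have : ((b j : ℚ) : ℝ) = ((∑ i, (V i j : ℚ) * q i : ℚ) : ℝ) := by rw [this]
        push_cast at this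
        simp only [Finset.sum_apply, Pi.smul_apply, smul_eq_mul]
        rw [this]
        exact Finset.sum_congr rfl fun i _ => by ring
      rw [Submodule.restrictScalars_mem, this]
      exact Submodule.sum_mem _ fun i _ =>
        Submodule.smul_mem _ _ (subset_span ⟨i, rfl⟩)
    obtain ⟨d, hd⟩ := (mem_span_range_iff_exists_fun ℤ).1 (hsat hbmem)
    -- q = d over ℚ
    have hqd : ∀ i, q i = (d i : ℚ) := by
      have h0 : ∑ i, ((q i : ℝ) - (d i : ℝ)) • (fun j => (V i j : ℝ)) = 0 := by
        funext j
        simp only [Finset.sum_apply, Pi.smul_apply, smul_eq_mul, Pi.zero_apply, sub_mul]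
        rw [Finset.sum_sub_distrib]
        have e1 : ∑ i, (q i : ℝ) * (V i j : ℝ) = (b j : ℝ) := by
          have := hbdef j
          have : ((∑ i, (V i j : ℚ) * q i : ℚ) : ℝ) = ((b j : ℚ) : ℝ) := by rw [this]
          push_cast at this
          rw [← this]
          exact Finset.sum_congr rfl fun i _ => by ring
        have e2 : ∑ i, (d i : ℝ) * (V i j : ℝ) = (b j : ℝ) := by
          have := congrFun hd j
          simp only [Finset.sum_apply, Pi.smul_apply, smul_eq_mul] at this
          exact_mod_cast congrArg (Int.cast : ℤ → ℝ) this
        rw [e1, e2, sub_self]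
      have := Fintype.linearIndependent_iff.1 hind _ h0
      intro i
      have hi := this i
      have : (q i : ℝ) = ((d i : ℚ) : ℝ) := by
        push_cast
        linarith [sub_eq_zero.1 hi]
      exact_mod_cast this
    -- conclude φ a = 0, contradiction
    have : φ a = 0 := by
      rw [hkey]
      have : (∑ i, (a i : ℚ) * q i : ℚ) = ((∑ i, a i * d i : ℤ) : ℚ) := by
        push_cast
        exact Finset.sum_congr rfl fun i _ => by rw [hqd i]
      rw [this]
      refine (AddCircle.coe_eq_zero_iff _).2 ⟨∑ i, a i * d i, by simp⟩
    exact hc this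


end Auxiliary

theorem columns_basis_iff_rows_basis {p n r : ℕ}
    (U : Matrix (Fin p) (Fin n) ℤ) (F : Matrix (Fin p) (Fin r) ℤ)
    (V : Matrix (Fin r) (Fin n) ℤ)
    (hrank : (U.map (Int.cast : ℤ → ℝ)).rank = r)
    (hspan : colSpanZ U ≤ colSpanZ F)
    (hUV : U = F * V) :
    IsZBasis (fun j => fun i => F i j) (colSpanZ U) ↔
      IsZBasis (fun i => V i) (satOf (rowSpanR U)) := by
  classical
  set A := U.map (Int.cast : ℤ → ℝ) with hA
  set Fc := F.map (Int.cast : ℤ → ℝ) with hFc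
  set Vc := V.map (Int.cast : ℤ → ℝ) with hVc
  have hAFV : A = Fc * Vc := by
    rw [hA, hUV]
    exact Matrix.map_mul (f := Int.castRingHom ℝ)
  -- ranks
  have hrankF : Fc.rank = r := by
    refine le_antisymm (Fc.rank_le_card_width.trans (by simp)) ?_
    have h1 : A.rank ≤ Fc.rank := by rw [hAFV]; exact Matrix.rank_mul_le_left Fc Vc
    exact le_trans (le_of_eq hrank.symm) h1
  have hrankV : Vc.rank = r := by
    refine le_antisymm (Vc.rank_le_card_height.trans (by simp)) ?_
    have h1 : A.rank ≤ Vc.rank := by rw [hAFV]; exact Matrix.rank_mul_le_right Fc Vc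
    exact le_trans (le_of_eq hrank.symm) h1
  -- linear independence (ℝ and ℤ)
  have hFindR : LinearIndependent ℝ (fun j => fun i => ((F i j : ℝ))) :=
    cols_linIndep_of_rank Fc hrankF
  have hFindZ : LinearIndependent ℤ (fun j => fun i => F i j) := zIndep_of_cast hFindR
  have hVindR : LinearIndependent ℝ (fun i => fun j => ((V i j : ℝ))) := by
    have := cols_linIndep_of_rank Vcᵀ (by rw [Matrix.rank_transpose, hrankV])
    exact this
  have hVindZ : LinearIndependent ℤ (fun i => V i) := zIndep_of_cast hVindR
  -- rowSpanR U = rowSpanR V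
  have hrowUV : rowSpanR U = rowSpanR V := by
    have hle : rowSpanR U ≤ rowSpanR V := by
      rw [rowSpanR, Submodule.span_le]
      rintro _ ⟨i, rfl⟩
      have : (fun j => (U i j : ℝ)) = ∑ k, ((F i k : ℝ)) • (fun j => (V k j : ℝ)) := by
        funext j
        simp only [Finset.sum_apply, Pi.smul_apply, smul_eq_mul, hUV, Matrix.mul_apply]
        push_cast
        rfl
      have hmem : (fun j => (U i j : ℝ)) ∈ rowSpanR V := by
        rw [this]
        exact Submodule.sum_mem _ fun k _ =>
          Submodule.smul_mem _ _ (Submodule.subset_span ⟨k, rfl⟩)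
      exact hmem
    have hfinV : FiniteDimensional ℝ (rowSpanR V) :=
      FiniteDimensional.span_of_finite ℝ (Set.finite_range _)
    have hfU : Module.finrank ℝ (rowSpanR U) = r := by
      have h5 : rowSpanR U = Submodule.span ℝ (Set.range A.row) := rfl
      rw [h5, ← Matrix.rank_eq_finrank_span_row, hrank]
    have hfV : Module.finrank ℝ (rowSpanR V) ≤ r := by
      have := finrank_range_le_card (R := ℝ) (fun i => fun j => ((V i j : ℝ)))
      simp [Set.finrank] at this; exact this
    exact Submodule.eq_of_le_of_finrank_le hle (by rw [hfU]; exact hfV)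
  -- F-side: IsZBasis cols-F (colSpanZ U) ↔ colSpanZ V = ⊤
  have hinjF : Function.Injective F.mulVecLin := by
    have : Function.Injective F.mulVec := Matrix.mulVec_injective_iff.2 hFindZ
    exact this
  have hcolF : colSpanZ F = Submodule.map F.mulVecLin ⊤ := by
    rw [Submodule.map_top, Matrix.range_mulVecLin]; rfl
  have hcolU : colSpanZ U = Submodule.map F.mulVecLin (colSpanZ V) := by
    rw [colSpanZ, colSpanZ]
    have : (Set.range fun j => fun i => V i j) = Set.range V.col := rfl
    rw [this, Submodule.map_span, ← Set.range_comp]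
    have hfn : (fun j => fun i => U i j) = (⇑F.mulVecLin ∘ V.col) := by
      funext j i
      simp [hUV, Matrix.col_apply, Matrix.mulVecLin_apply, Matrix.mulVec, Matrix.mul_apply, dotProduct]
    rw [hfn]
  have hFside : IsZBasis (fun j => fun i => F i j) (colSpanZ U) ↔ colSpanZ V = ⊤ := by
    constructor
    · rintro ⟨-, hsp⟩
      have hFU : colSpanZ F ≤ colSpanZ U := hsp.le
      rw [hcolF, hcolU, Submodule.map_le_map_iff_of_injective hinjF] at hFU
      exact top_le_iff.1 hFU
    · intro hVtop
      refine ⟨hFindZ, ?_⟩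
      have : Submodule.span ℤ (Set.range fun j => fun i => F i j) = colSpanZ F := rfl
      rw [this, hcolF, hcolU, hVtop]
  -- V-side
  have hVrowsat : Submodule.span ℤ (Set.range fun i => V i) ≤ satOf (rowSpanR V) := by
    rw [Submodule.span_le]
    rintro _ ⟨i, rfl⟩
    show castLM n (V i) ∈ (rowSpanR V).restrictScalars ℤ
    rw [Submodule.restrictScalars_mem, castLM_apply']
    exact Submodule.subset_span ⟨i, rfl⟩
  have hVside : IsZBasis (fun i => V i) (satOf (rowSpanR U)) ↔
      satOf (rowSpanR V) ≤ Submodule.span ℤ (Set.range fun i => V i) := by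
    rw [hrowUV]
    constructor
    · rintro ⟨-, hsp⟩
      exact hsp.ge
    · intro h
      exact ⟨hVindZ, le_antisymm hVrowsat h⟩
  rw [hFside, hVside]
  exact core_saturation V hVindR
end

section
/- Let U be a p×n integer matrix of rank r, F a p×r integer matrix, and V the unique r×n integer matrix with U = FV. If the columns of F form a ℤ-basis of ℤ⟨u⟩ (the ℤ-module generated by the columns of U), then for any subset I ⊆ {1,…,n} of size r, the Gram norm ‖u_I‖ := √det(U_Iᵀ U_I) satisfies ‖u_I‖ = ‖ℤ⟨u⟩‖ · |det(V_I)|, where ‖ℤ⟨u⟩‖ is the covolume of the lattice ℤ⟨u⟩. -/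
open Matrix

/-- if the columns of `F` form a ℤ-basis of `ℤ⟨u⟩`, then for any `I` of size `r`,
`‖u_I‖ = ‖ℤ⟨u⟩‖ · |det V_I|` (the covolume of `ℤ⟨u⟩` being computed from the basis `F`). -/
theorem gram_norm_eq_covol_mul_det {p n r : ℕ}
    (U : Matrix (Fin p) (Fin n) ℤ) (F : Matrix (Fin p) (Fin r) ℤ)
    (V : Matrix (Fin r) (Fin n) ℤ)
    (hrank : (U.map (Int.cast : ℤ → ℝ)).rank = r)
    (hUV : U = F * V)
    (hF : IsZBasis (fun j => fun i => F i j) (colSpanZ U))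
    (I : Finset (Fin n)) (hI : I.card = r) :
    ∀ e : Fin r ≃ ↥I,
      Real.sqrt (gramDet (U.map (Int.cast : ℤ → ℝ)) I)
        = covol (fun a => fun i => (F i a : ℝ)) *
          |(((V.submatrix id (fun a => ((e a : ↥I) : Fin n))).det : ℤ) : ℝ)| := by
  intro e
  classical
  set A := U.map (Int.cast : ℤ → ℝ) with hAdef
  set F' := F.map (Int.cast : ℤ → ℝ) with hFdef
  set V' := V.map (Int.cast : ℤ → ℝ) with hVdef
  have hA : A = F' * V' := by
    rw [hAdef, hUV]
    ext i j
    simp [Matrix.mul_apply, hFdef, hVdef]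
  set C := V'.submatrix id (fun j : ↥I => (j : Fin n)) with hCdef
  set W := V'.submatrix id (fun a : Fin r => ((e a : ↥I) : Fin n)) with hWdef
  set G := F'ᵀ * F' with hGdef
  have hB : A.submatrix id (fun j : ↥I => (j : Fin n)) = F' * C := by
    ext i j
    simp [hA, Matrix.mul_apply, hCdef]
  have hgram : gramDet A I = ((Cᵀ * G * C)).det := by
    unfold gramDet
    rw [hB, Matrix.transpose_mul]
    simp only [hGdef, Matrix.mul_assoc]
  have hre : (Cᵀ * G * C).submatrix e e = Wᵀ * G * W := by
    ext a b
    simp [Matrix.mul_apply, hCdef, hWdef, Matrix.submatrix, Finset.sum_mul,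
      Finset.mul_sum]
  have hdet : gramDet A I = G.det * W.det ^ 2 := by
    rw [hgram, ← Matrix.det_submatrix_equiv_self e, hre]
    rw [Matrix.det_mul, Matrix.det_mul, Matrix.det_transpose]
    ring
  have hcov : covol (fun a => fun i => (F i a : ℝ)) = Real.sqrt G.det := by
    unfold covol
    congr 1
  have hW : W.det = (((V.submatrix id (fun a => ((e a : ↥I) : Fin n))).det : ℤ) : ℝ) := by
    rw [hWdef, hVdef]
    rw [show (V.map (Int.cast : ℤ → ℝ)).submatrix id (fun a : Fin r => ((e a : ↥I) : Fin n))
        = (V.submatrix id (fun a : Fin r => ((e a : ↥I) : Fin n))).map (Int.cast : ℤ → ℝ) from rfl]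
    exact (RingHom.map_det (Int.castRingHom ℝ) _).symm
  rw [hdet, hcov, Real.sqrt_mul' _ (sq_nonneg W.det), Real.sqrt_sq_eq_abs, hW]
end

section
/- Let Ũ be a p×m real matrix with independent rows and Ṽ an (m−p)×m real matrix with independent rows such that Ũ Ṽᵀ = 0. Then there exists a nonzero real number λ, independent of I, such that for every subset I ⊆ {1,…,m} of size p, det(Ũ_I) = λ · ε(I ⋆ ∁I) · det(Ṽ_{∁I}), where ε(I ⋆ ∁I) = (−1)^ι with ι the number of inversions of the sequence listing I in increasing order followed by ∁I in increasing order. -/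
open Matrix Equiv Equiv.Perm Finset
open Matrix Equiv Equiv.Perm Finset

lemma my_sign_eq_signAux {n : ℕ} (σ : Equiv.Perm (Fin n)) :
    Equiv.Perm.sign σ = Equiv.Perm.signAux σ := by
  refine Equiv.Perm.swap_induction_on σ (by simp) ?_
  intro f x y hxy ih
  rw [Equiv.Perm.signAux_mul, Equiv.Perm.signAux_swap hxy, _root_.map_mul,
    Equiv.Perm.sign_swap hxy, ih]

lemma my_signAux_pow {n : ℕ} (σ : Equiv.Perm (Fin n)) :
    Equiv.Perm.signAux σ =
      (-1 : ℤˣ) ^ ((Equiv.Perm.finPairsLT n).filter (fun x => σ x.1 ≤ σ x.2)).card := by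
  unfold Equiv.Perm.signAux
  rw [← Finset.prod_filter_mul_prod_filter_not (Equiv.Perm.finPairsLT n)
    (fun x => σ x.1 ≤ σ x.2)]
  rw [Finset.prod_congr rfl (fun x hx => if_pos (Finset.mem_filter.mp hx).2),
    Finset.prod_congr rfl (fun x hx => if_neg (Finset.mem_filter.mp hx).2),
    Finset.prod_const, Finset.prod_const, one_pow, mul_one]

lemma my_sign_shuffle {m p : ℕ} (σ : Equiv.Perm (Fin m)) (I : Finset (Fin m))
    (hmem : ∀ x : Fin m, σ x ∈ I ↔ (x : ℕ) < p)
    (h1 : ∀ x y : Fin m, x < y → (y : ℕ) < p → σ x < σ y)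
    (h2 : ∀ x y : Fin m, x < y → p ≤ (x : ℕ) → σ x < σ y) :
    Equiv.Perm.sign σ =
      (-1 : ℤˣ) ^ (∑ i ∈ I, ((Iᶜ).filter (fun j => j < i)).card) := by
  rw [my_sign_eq_signAux, my_signAux_pow]
  congr 1
  rw [← Finset.card_sigma]
  refine Finset.card_bij' (fun x _ => ⟨σ x.2, σ x.1⟩) (fun y _ => ⟨σ⁻¹ y.2, σ⁻¹ y.1⟩)
    ?_ ?_ ?_ ?_
  · rintro ⟨a, b⟩ ha
    dsimp only
    rw [Finset.mem_filter, Equiv.Perm.mem_finPairsLT] at ha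
    dsimp only at ha
    obtain ⟨hba, hle⟩ := ha
    have hne : σ a ≠ σ b := fun h => (ne_of_gt hba) (σ.injective h)
    have hlt : σ a < σ b := lt_of_le_of_ne hle hne
    have hb : (b : ℕ) < p := by
      by_contra h
      exact absurd (h2 b a hba (le_of_not_gt h)) (not_lt_of_gt hlt)
    have haI : ¬ (a : ℕ) < p := by
      intro h
      exact absurd (h1 b a hba h) (not_lt_of_gt hlt)
    rw [Finset.mem_sigma]
    refine ⟨(hmem b).mpr hb, ?_⟩
    rw [Finset.mem_filter, Finset.mem_compl]
    exact ⟨fun h => haI ((hmem a).mp h), hlt⟩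
  · rintro ⟨i, j⟩ hij
    rw [Finset.mem_sigma, Finset.mem_filter, Finset.mem_compl] at hij
    obtain ⟨hi, hj, hji⟩ := hij
    dsimp only
    rw [Finset.mem_filter, Equiv.Perm.mem_finPairsLT]
    dsimp only
    have hi' : ((σ⁻¹ i : Fin m) : ℕ) < p := by
      rw [← hmem (σ⁻¹ i)]; simpa using hi
    have hj' : ¬ ((σ⁻¹ j : Fin m) : ℕ) < p := by
      rw [← hmem (σ⁻¹ j)]; simpa using hj
    constructor
    · exact Fin.lt_def.mpr (lt_of_lt_of_le hi' (le_of_not_gt hj'))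
    · simpa using le_of_lt hji
  · rintro ⟨a, b⟩ _; simp
  · rintro ⟨i, j⟩ _; simp
open Matrix Finset

lemma vecMul_V_eq_zero_imp {k n : ℕ} (V : Matrix (Fin k) (Fin n) ℝ)
    (hV : LinearIndependent ℝ (fun i => V i)) (x : Fin k → ℝ) (hx : x ᵥ* V = 0) :
    x = 0 := by
  have hsum : ∑ i, x i • V i = 0 := by
    funext j
    have := congrFun hx j
    simpa [Matrix.vecMul, dotProduct, Finset.sum_apply] using this
  funext i
  exact Fintype.linearIndependent_iff.mp hV x hsum i

lemma my_gram_ne_zero {k n : ℕ} (V : Matrix (Fin k) (Fin n) ℝ)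
    (hV : LinearIndependent ℝ (fun i => V i)) : (V * Vᵀ).det ≠ 0 := by
  have key : ∀ x : Fin k → ℝ, x ᵥ* (V * Vᵀ) = 0 → x = 0 := by
    intro x hx
    have h0 : (x ᵥ* V) ᵥ* Vᵀ = 0 := by rw [Matrix.vecMul_vecMul]; exact hx
    have h1 : (x ᵥ* V) ⬝ᵥ (x ᵥ* V) = 0 := by
      have := congrArg (fun w => w ⬝ᵥ x) h0
      simpa [Matrix.vecMul_transpose, dotProduct_comm (V *ᵥ (x ᵥ* V)) x,
        Matrix.dotProduct_mulVec] using this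
    have h2 : x ᵥ* V = 0 := dotProduct_self_eq_zero.mp h1
    exact vecMul_V_eq_zero_imp V hV x h2
  have hinj : Function.Injective (V * Vᵀ).vecMul := by
    have : LinearMap.ker (V * Vᵀ).vecMulLinear = ⊥ :=
      LinearMap.ker_eq_bot'.mpr (fun x hx => key x (by simpa using hx))
    have := LinearMap.ker_eq_bot.mp this
    exact this
  have hu : IsUnit (V * Vᵀ) := Matrix.vecMul_injective_iff_isUnit.mp hinj
  exact ((Matrix.isUnit_iff_isUnit_det _).mp hu).ne_zero


/-- dot product with a fixed vector on the right, as a linear map -/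
def dotRightL {n : ℕ} (u : Fin n → ℝ) : (Fin n → ℝ) →ₗ[ℝ] ℝ where
  toFun z := u ⬝ᵥ z
  map_add' a b := dotProduct_add u a b
  map_smul' c a := by simp [dotProduct_smul]

def dotLeftL {n : ℕ} (u : Fin n → ℝ) : (Fin n → ℝ) →ₗ[ℝ] ℝ where
  toFun z := z ⬝ᵥ u
  map_add' a b := add_dotProduct a b u
  map_smul' c a := by simp [smul_dotProduct]

/-- if `Ũ` has `p` independent rows, `Ṽ` has `m−p` independent rows and
`Ũ Ṽᵀ = 0`, then there is a nonzero `λ`, independent of `I`, with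
`det(Ũ_I) = λ · ε(I ⋆ ∁I) · det(Ṽ_{∁I})` for all `I` of size `p`.
Here `ε(I ⋆ ∁I) = (−1)^ι`, `ι` being the number of inversions of the concatenation of the
increasing enumerations of `I` and `∁I`, i.e. the number of pairs `(i, j)` with `i ∈ I`,
`j ∉ I`, `j < i`. -/
theorem duality_with_signs {p m : ℕ}
    (Ut : Matrix (Fin p) (Fin m) ℝ) (Vt : Matrix (Fin (m - p)) (Fin m) ℝ)
    (hU : LinearIndependent ℝ (fun i => Ut i))
    (hV : LinearIndependent ℝ (fun i => Vt i))
    (hperp : Ut * Vtᵀ = 0) :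
    ∃ lam : ℝ, lam ≠ 0 ∧ ∀ (I : Finset (Fin m)) (hI : I.card = p),
      (Ut.submatrix id (fun a => ((I.orderIsoOfFin hI a : ↥I) : Fin m))).det
        = lam * ((-1 : ℝ) ^ (∑ i ∈ I, ((Iᶜ).filter (fun j => j < i)).card)) *
          (Vt.submatrix id (fun a =>
            (((Iᶜ).orderIsoOfFin (by simp [Finset.card_compl, hI]) a : ↥(Iᶜ)) : Fin m))).det := by
  classical
  have hpm : p ≤ m := by
    have h1 := hU.fintype_card_le_finrank
    simpa [Module.finrank_fintype_fun_eq_card] using h1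
  have hq : p + (m - p) = m := Nat.add_sub_cancel' hpm
  set e₀ : (Fin p ⊕ Fin (m - p)) ≃ Fin m := finSumFinEquiv.trans (finCongr hq) with he₀def
  set M' : Matrix (Fin p ⊕ Fin (m - p)) (Fin m) ℝ := Matrix.fromRows Ut Vt with hM'def
  have hUV : ∀ i j, Ut i ⬝ᵥ Vt j = 0 := by
    intro i j
    have := congrFun (congrFun hperp i) j
    simpa [Matrix.mul_apply, dotProduct] using this
  have hdisj : Disjoint (Submodule.span ℝ (Set.range fun i => Ut i))
      (Submodule.span ℝ (Set.range fun i => Vt i)) := by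
    rw [Submodule.disjoint_def]
    intro x hxU hxV
    have hUx : ∀ i, Ut i ⬝ᵥ x = 0 := by
      intro i
      have hker : Submodule.span ℝ (Set.range fun j => Vt j) ≤
          LinearMap.ker (dotRightL (Ut i)) := by
        rw [Submodule.span_le]
        rintro _ ⟨j, rfl⟩
        simp [dotRightL, hUV i j]
      exact LinearMap.mem_ker.mp (hker hxV)
    have hxx : x ⬝ᵥ x = 0 := by
      have hker : Submodule.span ℝ (Set.range fun i => Ut i) ≤
          LinearMap.ker (dotLeftL x) := by
        rw [Submodule.span_le]
        rintro _ ⟨i, rfl⟩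
        simp only [SetLike.mem_coe, LinearMap.mem_ker, dotLeftL, LinearMap.coe_mk,
          AddHom.coe_mk]
        exact hUx i
      exact LinearMap.mem_ker.mp (hker hxU)
    exact dotProduct_self_eq_zero.mp hxx
  have hrows : LinearIndependent ℝ (fun i => M' i) := hU.sum_type hV hdisj
  set M : Matrix (Fin m) (Fin m) ℝ := M'.submatrix e₀.symm id with hMdef
  have hMrows : LinearIndependent ℝ (fun x => M x) :=
    hrows.comp e₀.symm e₀.symm.injective
  have hc : M.det ≠ 0 :=
    ((Matrix.isUnit_iff_isUnit_det M).mp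
      (Matrix.linearIndependent_rows_iff_isUnit.mp hMrows)).ne_zero
  have hg : (Vt * Vtᵀ).det ≠ 0 := my_gram_ne_zero Vt hV
  refine ⟨M.det / (Vt * Vtᵀ).det, div_ne_zero hc hg, ?_⟩
  intro I hI
  have hI' : (Iᶜ).card = m - p := by simp [Finset.card_compl, hI]
  set u : Fin p → Fin m := fun a => ((I.orderIsoOfFin hI a : ↥I) : Fin m) with hu
  set v : Fin (m - p) → Fin m := fun b => (((Iᶜ).orderIsoOfFin hI' b : ↥(Iᶜ)) : Fin m) with hv
  have huI : ∀ a, u a ∈ I := fun a => (I.orderIsoOfFin hI a).2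
  have hvI : ∀ b, v b ∈ Iᶜ := fun b => ((Iᶜ).orderIsoOfFin hI' b).2
  have humono : StrictMono u := fun a b h =>
    Subtype.coe_lt_coe.mpr ((I.orderIsoOfFin hI).strictMono h)
  have hvmono : StrictMono v := fun a b h =>
    Subtype.coe_lt_coe.mpr (((Iᶜ).orderIsoOfFin hI').strictMono h)
  have hinj : Function.Injective (Sum.elim u v) := by
    rintro (a | a) (b | b) h <;> simp only [Sum.elim_inl, Sum.elim_inr] at h
    · exact congrArg Sum.inl (humono.injective h)
    · exact absurd (huI a) (by rw [h]; exact Finset.mem_compl.mp (hvI b))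
    · exact absurd (huI b) (by rw [← h]; exact Finset.mem_compl.mp (hvI a))
    · exact congrArg Sum.inr (hvmono.injective h)
  have hbij : Function.Bijective (Sum.elim u v) :=
    (Fintype.bijective_iff_injective_and_card _).mpr ⟨hinj, by simp [hq]⟩
  set f : (Fin p ⊕ Fin (m - p)) ≃ Fin m := Equiv.ofBijective _ hbij with hfdef
  have hfl : ∀ a, f (Sum.inl a) = u a := fun a => rfl
  have hfr : ∀ b, f (Sum.inr b) = v b := fun b => rfl
  set σ : Equiv.Perm (Fin m) := e₀.symm.trans f with hσdef
  have hσl : ∀ a : Fin p, σ (e₀ (Sum.inl a)) = u a := by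
    intro a; simp only [hσdef, Equiv.trans_apply, Equiv.symm_apply_apply]; exact hfl a
  have hσr : ∀ b : Fin (m - p), σ (e₀ (Sum.inr b)) = v b := by
    intro b; simp only [hσdef, Equiv.trans_apply, Equiv.symm_apply_apply]; exact hfr b
  have he₀l : ∀ a : Fin p, ((e₀ (Sum.inl a) : Fin m) : ℕ) = (a : ℕ) := by
    intro a; simp [he₀def]
  have he₀r : ∀ b : Fin (m - p), ((e₀ (Sum.inr b) : Fin m) : ℕ) = p + (b : ℕ) := by
    intro b; simp [he₀def]
  -- hypotheses of the shuffle lemma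
  have hmem : ∀ x : Fin m, σ x ∈ I ↔ (x : ℕ) < p := by
    intro x
    obtain ⟨y, rfl⟩ : ∃ y, e₀ y = x := ⟨e₀.symm x, e₀.apply_symm_apply x⟩
    cases y with
    | inl a =>
        rw [hσl a, he₀l a]
        exact iff_of_true (huI a) a.2
    | inr b =>
        rw [hσr b, he₀r b]
        exact iff_of_false (Finset.mem_compl.mp (hvI b)) (by omega)
  have h1 : ∀ x y : Fin m, x < y → (y : ℕ) < p → σ x < σ y := by
    intro x y hxy hy
    obtain ⟨x', rfl⟩ : ∃ x', e₀ x' = x := ⟨e₀.symm x, e₀.apply_symm_apply x⟩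
    obtain ⟨y', rfl⟩ : ∃ y', e₀ y' = y := ⟨e₀.symm y, e₀.apply_symm_apply y⟩
    rw [Fin.lt_def] at hxy
    cases y' with
    | inr b => rw [he₀r b] at hy; omega
    | inl b =>
        rw [he₀l b] at hy hxy
        cases x' with
        | inr a => rw [he₀r a] at hxy; omega
        | inl a =>
            rw [he₀l a] at hxy
            rw [hσl a, hσl b]
            exact humono (by exact hxy)
  have h2 : ∀ x y : Fin m, x < y → p ≤ (x : ℕ) → σ x < σ y := by
    intro x y hxy hx
    obtain ⟨x', rfl⟩ : ∃ x', e₀ x' = x := ⟨e₀.symm x, e₀.apply_symm_apply x⟩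
    obtain ⟨y', rfl⟩ : ∃ y', e₀ y' = y := ⟨e₀.symm y, e₀.apply_symm_apply y⟩
    rw [Fin.lt_def] at hxy
    cases x' with
    | inl a => rw [he₀l a] at hx; omega
    | inr a =>
        rw [he₀r a] at hx hxy
        cases y' with
        | inl b => rw [he₀l b] at hxy; have := b.2; omega
        | inr b =>
            rw [he₀r b] at hxy
            rw [hσr a, hσr b]
            exact hvmono (by omega)
  have hsign := my_sign_shuffle σ I hmem h1 h2
  -- the determinant identity
  set P : Matrix (Fin m) (Fin p) ℝ := (1 : Matrix (Fin m) (Fin m) ℝ).submatrix id u with hP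
  set W : Matrix (Fin m) (Fin p ⊕ Fin (m - p)) ℝ := Matrix.fromCols P Vtᵀ with hW
  have hUtP : Ut * P = Ut.submatrix id u := by
    have := Matrix.mul_submatrix_one (Equiv.refl (Fin m)) u Ut
    simpa [hP] using this
  have hVtP : Vt * P = Vt.submatrix id u := by
    have := Matrix.mul_submatrix_one (Equiv.refl (Fin m)) u Vt
    simpa [hP] using this
  have hMW : M' * W = Matrix.fromBlocks (Ut.submatrix id u) 0
      (Vt.submatrix id u) (Vt * Vtᵀ) := by
    rw [hM'def, hW, Matrix.fromRows_mul_fromCols, hUtP, hVtP, hperp]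
  have hdet1 : (M' * W).det = (Ut.submatrix id u).det * (Vt * Vtᵀ).det := by
    rw [hMW, Matrix.det_fromBlocks_zero₁₂]
  have hsplit : (M'.submatrix id f) * (W.submatrix f id) = M' * W := by
    rw [show M'.submatrix id ⇑f = M'.submatrix (id : _ → _) ⇑f from rfl,
      Matrix.submatrix_mul_equiv M' W id f id, Matrix.submatrix_id_id]
  have hWf : W.submatrix f id = Matrix.fromBlocks (1 : Matrix (Fin p) (Fin p) ℝ)
      (Vtᵀ.submatrix u id) 0 (Vtᵀ.submatrix v id) := by
    ext x j
    cases x with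
    | inl a =>
        cases j with
        | inl b =>
            simp only [Matrix.submatrix_apply, id_eq, hfl, hW,
              Matrix.fromCols_apply_inl, Matrix.fromBlocks_apply₁₁, hP]
            simp [Matrix.one_apply, humono.injective.eq_iff]
        | inr b =>
            simp [hW, hfl, Matrix.fromCols_apply_inr]
    | inr a =>
        cases j with
        | inl b =>
            simp only [Matrix.submatrix_apply, id_eq, hfr, hW,
              Matrix.fromCols_apply_inl, Matrix.fromBlocks_apply₂₁, hP]
            rw [Matrix.one_apply_ne]
            · simp
            · intro h
              exact absurd (huI b) (by rw [← h]; exact Finset.mem_compl.mp (hvI a))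
        | inr b =>
            simp [hW, hfr, Matrix.fromCols_apply_inr]
  have hdet2 : (W.submatrix f id).det = (Vt.submatrix id v).det := by
    rw [hWf, Matrix.det_fromBlocks_zero₂₁, Matrix.det_one, one_mul,
      ← Matrix.transpose_submatrix, Matrix.det_transpose]
  have hdet3 : (M'.submatrix id f).det = ((Equiv.Perm.sign σ : ℤ) : ℝ) * M.det := by
    have h : M'.submatrix id ⇑f = ((M'.submatrix ⇑e₀.symm id).submatrix id ⇑σ).submatrix ⇑e₀ ⇑e₀ := by
      ext x j
      simp [hσdef, Matrix.submatrix_apply]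
    rw [h, Matrix.det_submatrix_equiv_self, ← hMdef, Matrix.det_permute']
  have key : (Ut.submatrix id u).det * (Vt * Vtᵀ).det =
      ((Equiv.Perm.sign σ : ℤ) : ℝ) * M.det * (Vt.submatrix id v).det := by
    rw [← hdet1, ← hsplit, Matrix.det_mul, hdet3, hdet2]
  have hsignR : ((Equiv.Perm.sign σ : ℤ) : ℝ) =
      (-1 : ℝ) ^ (∑ i ∈ I, ((Iᶜ).filter (fun j => j < i)).card) := by
    rw [hsign]
    push_cast
    simp
  show (Ut.submatrix id u).det =
    M.det / (Vt * Vtᵀ).det *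
      ((-1 : ℝ) ^ (∑ i ∈ I, ((Iᶜ).filter (fun j => j < i)).card)) *
      (Vt.submatrix id v).det
  rw [← hsignR]
  field_simp
  linear_combination key
end

section
/- Let Δ be a d-dimensional simplicial complex with n facets, y positive reals, v a basis of Z_d(Δ;ℝ), and a₁,…,a_l real d-chains. Write h_i = a_i − π(a_i) with π the (·,·)_y-orthogonal projection onto span(v). Then: (i) ‖v∧(a₁+⋯+a_l)‖²_y = Σ_i ‖v∧a_i‖²_y + 2‖v‖²_y Σ_{i<j} (h_i,h_j)_y, and (ii) ‖v∧a_i∧a_j‖²_y = ‖v‖²_y(‖h_i‖²_y‖h_j‖²_y − (h_i,h_j)²_y); in particular ‖v‖²_y (h_i,h_j)_y = ±√(‖v∧a_i‖²_y‖v∧a_j‖²_y − ‖v‖²_y‖v∧a_i∧a_j‖²_y). -/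
open Matrix

/-- The weighted inner product `(a,b)_y = Σ aᵢ bᵢ yᵢ` on `ℝⁿ`. -/
def wip {n : ℕ} (y a b : Fin n → ℝ) : ℝ := ∑ i, a i * b i * y i

/-- The weighted Gram determinant `‖f‖²_y = det((fᵢ, fⱼ)_y)` of a family of vectors. -/
noncomputable def wgram {n m : ℕ} (y : Fin n → ℝ) (f : Fin m → Fin n → ℝ) : ℝ :=
  (Matrix.of fun a b => wip y (f a) (f b)).det

lemma wip_comm {n : ℕ} (y a b : Fin n → ℝ) : wip y a b = wip y b a :=
  Finset.sum_congr rfl fun i _ => by ring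

lemma wip_sum_left {n : ℕ} {ι : Type*} (y : Fin n → ℝ) (t : Finset ι)
    (f : ι → Fin n → ℝ) (b : Fin n → ℝ) :
    wip y (∑ i ∈ t, f i) b = ∑ i ∈ t, wip y (f i) b := by
  simp only [wip, Finset.sum_apply, Finset.sum_mul]
  exact Finset.sum_comm

lemma wip_sum_right {n : ℕ} {ι : Type*} (y : Fin n → ℝ) (t : Finset ι)
    (f : ι → Fin n → ℝ) (b : Fin n → ℝ) :
    wip y b (∑ i ∈ t, f i) = ∑ i ∈ t, wip y b (f i) := by
  rw [wip_comm, wip_sum_left]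
  exact Finset.sum_congr rfl fun i _ => wip_comm _ _ _

/-- `wgram` as determinant of `M D Mᵀ`. -/
lemma wgram_eq_det {n m : ℕ} (y : Fin n → ℝ) (f : Fin m → Fin n → ℝ) :
    wgram y f = ((Matrix.of f) * Matrix.diagonal y * (Matrix.of f)ᵀ).det := by
  unfold wgram
  congr 1
  ext a b
  rw [Matrix.mul_apply]
  simp only [Matrix.mul_diagonal, Matrix.of_apply, Matrix.transpose_apply, wip]
  exact Finset.sum_congr rfl fun i _ => by ring

lemma wgram_comp_perm {n m : ℕ} (y : Fin n → ℝ) (f : Fin m → Fin n → ℝ)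
    (σ : Equiv.Perm (Fin m)) :
    wgram y (f ∘ σ) = wgram y f := by
  unfold wgram
  rw [show (Matrix.of fun a b => wip y ((f ∘ σ) a) ((f ∘ σ) b)) =
      (Matrix.of fun a b => wip y (f a) (f b)).submatrix σ σ from rfl,
    Matrix.det_submatrix_equiv_self]

/-- Adding an element of the span of the family to the appended vector does not change
the Gram determinant. -/
lemma wgram_snoc_add_span {n m : ℕ} (y : Fin n → ℝ) (w : Fin m → Fin n → ℝ)
    (b s : Fin n → ℝ) (hs : s ∈ Submodule.span ℝ (Set.range w)) :
    wgram y (Fin.snoc w (b + s)) = wgram y (Fin.snoc w b) := by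
  obtain ⟨c, hc⟩ := Submodule.mem_span_range_iff_exists_fun ℝ |>.mp hs
  set T : Matrix (Fin (m + 1)) (Fin (m + 1)) ℝ :=
    Matrix.of fun i j => if i = Fin.last m then (Fin.snoc c (1:ℝ) : Fin (m+1) → ℝ) j
      else if i = j then 1 else 0 with hT
  have hdetT : T.det = 1 := by
    rw [Matrix.det_of_lowerTriangular T ?_]
    · refine Finset.prod_eq_one fun i _ => ?_
      by_cases hi : i = Fin.last m
      · subst hi; simp [hT]
      · simp [hT, hi]
    · intro i j hij
      have hij' : i < j := hij
      have : i ≠ Fin.last m := by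
        intro hh; subst hh; exact absurd hij' (not_lt.mpr (Fin.le_last j))
      simp [hT, this, hij'.ne]
  have key : (Matrix.of (Fin.snoc w (b + s)) : Matrix (Fin (m + 1)) (Fin n) ℝ)
      = T * Matrix.of (Fin.snoc w b) := by
    ext i k
    rw [Matrix.mul_apply]
    refine Fin.lastCases ?_ (fun i' => ?_) i
    · simp only [hT, Matrix.of_apply, if_pos rfl]
      rw [Fin.sum_univ_castSucc]
      simp only [Fin.snoc_castSucc, Fin.snoc_last, one_mul]
      have hsk : s k = ∑ j, c j * w j k := by
        have := congrFun hc k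
        simpa [Finset.sum_apply] using this.symm
      simp only [Pi.add_apply, hsk]
      simp only [Fin.snoc_castSucc, if_true]
      ring
    · have hne : (Fin.castSucc i') ≠ Fin.last m := (Fin.castSucc_lt_last i').ne
      simp only [hT, Matrix.of_apply, if_neg hne, ite_mul, one_mul, zero_mul,
        Finset.sum_ite_eq, Finset.mem_univ, if_pos, Fin.snoc_castSucc]
  have assoc : T * Matrix.of (Fin.snoc w b) * Matrix.diagonal y *
        ((Matrix.of (Fin.snoc w b))ᵀ * Tᵀ)
      = T * (Matrix.of (Fin.snoc w b) * Matrix.diagonal y *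
          (Matrix.of (Fin.snoc w b))ᵀ) * Tᵀ := by
    simp only [Matrix.mul_assoc]
  rw [wgram_eq_det, wgram_eq_det, key, Matrix.transpose_mul, assoc,
    Matrix.det_mul, Matrix.det_mul, Matrix.det_transpose, hdetT, one_mul, mul_one]

/-- Appending a vector orthogonal to the family multiplies the Gram determinant
by its squared norm. -/
lemma wgram_snoc_orth {n m : ℕ} (y : Fin n → ℝ) (w : Fin m → Fin n → ℝ)
    (h : Fin n → ℝ) (horth : ∀ j, wip y h (w j) = 0) :
    wgram y (Fin.snoc w h) = wgram y w * wip y h h := by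
  unfold wgram
  rw [← Matrix.det_submatrix_equiv_self (finSumFinEquiv (m := m) (n := 1))]
  have hblock : ((Matrix.of fun a b => wip y ((Fin.snoc w h : Fin (m+1) → Fin n → ℝ) a)
        ((Fin.snoc w h : Fin (m+1) → Fin n → ℝ) b)).submatrix
        finSumFinEquiv finSumFinEquiv)
      = Matrix.fromBlocks (Matrix.of fun a b => wip y (w a) (w b)) 0 0
          (Matrix.of fun _ _ : Fin 1 => wip y h h) := by
    have horth' : ∀ j, wip y (w j) h = 0 := fun j => (wip_comm y (w j) h).trans (horth j)
    have hR : ∀ j : Fin 1, (Fin.natAdd m j : Fin (m + 1)) = Fin.last m := by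
      intro j
      apply Fin.ext
      simp [Fin.natAdd, Fin.last, Fin.val_eq_zero j]
    have hL : ∀ i : Fin m, (Fin.castAdd 1 i : Fin (m + 1)) = Fin.castSucc i := by
      intro i; rfl
    ext i j
    rcases i with i | i <;> rcases j with j | j <;>
      simp [Matrix.submatrix_apply, hR, hL, Fin.snoc_castSucc, Fin.snoc_last,
        Matrix.fromBlocks, horth, horth']
  rw [hblock, Matrix.det_fromBlocks_zero₂₁, Matrix.det_fin_one]
  rfl

/-- Appending two vectors orthogonal to the family multiplies the Gram determinant
by their 2×2 Gram determinant. -/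
lemma wgram_snoc_snoc_orth {n m : ℕ} (y : Fin n → ℝ) (w : Fin m → Fin n → ℝ)
    (h₁ h₂ : Fin n → ℝ) (horth₁ : ∀ j, wip y h₁ (w j) = 0)
    (horth₂ : ∀ j, wip y h₂ (w j) = 0) :
    wgram y (Fin.snoc (Fin.snoc w h₁ : Fin (m+1) → Fin n → ℝ) h₂)
      = wgram y w * (wip y h₁ h₁ * wip y h₂ h₂ - wip y h₁ h₂ * wip y h₂ h₁) := by
  unfold wgram
  rw [← Matrix.det_submatrix_equiv_self (finSumFinEquiv (m := m) (n := 2))]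
  set f : Fin (m+2) → Fin n → ℝ :=
    Fin.snoc (Fin.snoc w h₁ : Fin (m+1) → Fin n → ℝ) h₂ with hf
  have horth₁' : ∀ j, wip y (w j) h₁ = 0 := fun j => (wip_comm y (w j) h₁).trans (horth₁ j)
  have horth₂' : ∀ j, wip y (w j) h₂ = 0 := fun j => (wip_comm y (w j) h₂).trans (horth₂ j)
  have hL : ∀ i : Fin m, f (Fin.castAdd 2 i) = w i := by
    intro i
    have : (Fin.castAdd 2 i : Fin (m + 2)) = Fin.castSucc (Fin.castSucc i) := by
      apply Fin.ext; simp [Fin.castAdd, Fin.castSucc, Fin.castLE]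
    rw [this, hf, Fin.snoc_castSucc, Fin.snoc_castSucc]
  have hR0 : f (Fin.natAdd m (0 : Fin 2)) = h₁ := by
    have : (Fin.natAdd m (0 : Fin 2) : Fin (m + 2))
        = Fin.castSucc (Fin.last m) := by
      apply Fin.ext; simp [Fin.natAdd, Fin.last]
    rw [this, hf, Fin.snoc_castSucc, Fin.snoc_last]
  have hR1 : f (Fin.natAdd m (1 : Fin 2)) = h₂ := by
    have : (Fin.natAdd m (1 : Fin 2) : Fin (m + 2)) = Fin.last (m + 1) := by
      apply Fin.ext; simp [Fin.natAdd, Fin.last]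
    rw [this, hf, Fin.snoc_last]
  have hblock : ((Matrix.of fun a b => wip y (f a) (f b)).submatrix
        finSumFinEquiv finSumFinEquiv)
      = Matrix.fromBlocks (Matrix.of fun a b => wip y (w a) (w b)) 0 0
          (Matrix.of !![wip y h₁ h₁, wip y h₁ h₂; wip y h₂ h₁, wip y h₂ h₂]) := by
    ext i j
    rcases i with i | i <;> rcases j with j | j
    · simp [hL, Matrix.fromBlocks]
    · fin_cases j <;>
        simp [hL, hR0, hR1, Matrix.fromBlocks, horth₁', horth₂']
    · fin_cases i <;> simp [hL, hR0, hR1, Matrix.fromBlocks, horth₁, horth₂]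
    · fin_cases i <;> fin_cases j <;> simp [hR0, hR1, Matrix.fromBlocks] <;> rfl
  rw [hblock, Matrix.det_fromBlocks_zero₂₁, Matrix.det_fin_two]
  rfl

/-- Swapping the last two appended vectors does not change the Gram determinant. -/
lemma wgram_snoc_swap {n m : ℕ} (y : Fin n → ℝ) (w : Fin m → Fin n → ℝ)
    (b c : Fin n → ℝ) :
    wgram y (Fin.snoc (Fin.snoc w b : Fin (m+1) → Fin n → ℝ) c)
      = wgram y (Fin.snoc (Fin.snoc w c : Fin (m+1) → Fin n → ℝ) b) := by
  set σ : Equiv.Perm (Fin (m + 2)) :=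
    Equiv.swap (Fin.last (m + 1)) (Fin.castSucc (Fin.last m)) with hσ
  have key : (Fin.snoc (Fin.snoc w b : Fin (m+1) → Fin n → ℝ) c)
      = (Fin.snoc (Fin.snoc w c : Fin (m+1) → Fin n → ℝ) b) ∘ σ := by
    funext i
    refine Fin.lastCases ?_ (fun i' => ?_) i
    · simp [hσ, Equiv.swap_apply_left, Fin.snoc_last, Fin.snoc_castSucc]
    · refine Fin.lastCases ?_ (fun i'' => ?_) i'
      · simp [hσ, Equiv.swap_apply_right, Fin.snoc_last, Fin.snoc_castSucc]
      · have h1 : Fin.castSucc (Fin.castSucc i'') ≠ Fin.last (m + 1) :=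
          (Fin.castSucc_lt_last _).ne
        have h2 : Fin.castSucc (Fin.castSucc i'') ≠ Fin.castSucc (Fin.last m) :=
          fun hh => (Fin.castSucc_lt_last i'').ne (Fin.castSucc_injective _ hh)
        simp [hσ, Equiv.swap_apply_of_ne_of_ne h1 h2, Fin.snoc_castSucc]
  rw [key, wgram_comp_perm]

lemma sym_double_sum {l : ℕ} (g : Fin l → Fin l → ℝ) (hg : ∀ i j, g i j = g j i) :
    ∑ i, ∑ j, g i j
      = (∑ i, g i i) + 2 * ∑ i, ∑ j ∈ Finset.univ.filter (fun j => i < j), g i j := by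
  have expand : ∀ i j : Fin l, g i j
      = (if i < j then g i j else 0) + (if j < i then g i j else 0)
        + (if i = j then g i j else 0) := by
    intro i j
    rcases lt_trichotomy i j with hlt | heq | hgt
    · simp [hlt, not_lt_of_gt hlt, hlt.ne]
    · simp [heq, lt_irrefl]
    · simp [hgt, not_lt_of_gt hgt, hgt.ne']
  calc ∑ i, ∑ j, g i j
      = ∑ i, ∑ j, ((if i < j then g i j else 0) + (if j < i then g i j else 0)
          + (if i = j then g i j else 0)) := by
        refine Finset.sum_congr rfl fun i _ => Finset.sum_congr rfl fun j _ => expand i j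
    _ = (∑ i, ∑ j, if i < j then g i j else 0)
        + (∑ i, ∑ j, if j < i then g i j else 0)
        + (∑ i, ∑ j, if i = j then g i j else 0) := by
        simp [Finset.sum_add_distrib]
    _ = (∑ i, g i i) + 2 * ∑ i, ∑ j ∈ Finset.univ.filter (fun j => i < j), g i j := by
        have e1 : (∑ i, ∑ j, if j < i then g i j else 0)
            = ∑ i, ∑ j, if i < j then g i j else 0 := by
          rw [Finset.sum_comm]
          exact Finset.sum_congr rfl fun i _ => Finset.sum_congr rfl fun j _ => by
            by_cases hij : i < j <;> simp [hij, hg i j]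
        have e2 : (∑ i : Fin l, ∑ j, if i = j then g i j else 0) = ∑ i, g i i := by
          refine Finset.sum_congr rfl fun i _ => ?_
          simp
        have e3 : ∀ i : Fin l, (∑ j ∈ Finset.univ.filter (fun j => i < j), g i j)
            = ∑ j, if i < j then g i j else 0 := fun i =>
          (Finset.sum_filter _ _)
        rw [e1, e2]
        simp only [e3]
        ring

lemma range_subset_snoc {n m : ℕ} (w : Fin m → Fin n → ℝ) (x : Fin n → ℝ) :
    Set.range w ⊆ Set.range (Fin.snoc w x : Fin (m+1) → Fin n → ℝ) := by
  rintro _ ⟨i, rfl⟩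
  exact ⟨Fin.castSucc i, Fin.snoc_castSucc _ _ _⟩

/-- with `v` a basis of the cycle space, `hᵢ = aᵢ − π(aᵢ)` the orthogonal
components of the `aᵢ` with respect to `span v` and `(·,·)_y`:
(i) `‖v∧(a₁+⋯+a_l)‖²_y = Σᵢ ‖v∧aᵢ‖²_y + 2‖v‖²_y Σ_{i<j} (hᵢ,hⱼ)_y`;
(ii) `‖v∧aᵢ∧aⱼ‖²_y = ‖v‖²_y (‖hᵢ‖²_y ‖hⱼ‖²_y − (hᵢ,hⱼ)²_y)`;
(iii) `(‖v‖²_y (hᵢ,hⱼ)_y)² = ‖v∧aᵢ‖²_y ‖v∧aⱼ‖²_y − ‖v‖²_y ‖v∧aᵢ∧aⱼ‖²_y`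
(the "±√" form of the cross term). -/
theorem gram_expansion_identities {n m l : ℕ}
    (y : Fin n → ℝ) (hy : ∀ i, 0 < y i)
    (v : Fin m → Fin n → ℝ) (hv : LinearIndependent ℝ v)
    (a h : Fin l → Fin n → ℝ)
    (hmem : ∀ i, a i - h i ∈ Submodule.span ℝ (Set.range v))
    (horth : ∀ i j, wip y (h i) (v j) = 0) :
    (wgram y (Fin.snoc v (∑ i, a i))
        = (∑ i, wgram y (Fin.snoc v (a i)))
          + 2 * wgram y v *
            ∑ i, ∑ j ∈ Finset.univ.filter (fun j => i < j), wip y (h i) (h j)) ∧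
    (∀ i j, wgram y (Fin.snoc (Fin.snoc v (a i)) (a j))
        = wgram y v *
            (wip y (h i) (h i) * wip y (h j) (h j) - wip y (h i) (h j) ^ 2)) ∧
    (∀ i j, (wgram y v * wip y (h i) (h j)) ^ 2
        = wgram y (Fin.snoc v (a i)) * wgram y (Fin.snoc v (a j))
          - wgram y v * wgram y (Fin.snoc (Fin.snoc v (a i)) (a j))) := by
  -- individual squared norms
  have key1 : ∀ i, wgram y (Fin.snoc v (a i)) = wgram y v * wip y (h i) (h i) := by
    intro i
    have e : h i + (a i - h i) = a i := by abel
    rw [← e, wgram_snoc_add_span y v (h i) (a i - h i) (hmem i),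
      wgram_snoc_orth y v (h i) (horth i)]
  -- double-appended squared norms
  have key2 : ∀ i j, wgram y (Fin.snoc (Fin.snoc v (a i)) (a j))
      = wgram y v * (wip y (h i) (h i) * wip y (h j) (h j) - wip y (h i) (h j) ^ 2) := by
    intro i j
    have ei : h i + (a i - h i) = a i := by abel
    have ej : h j + (a j - h j) = a j := by abel
    have step1 : wgram y (Fin.snoc (Fin.snoc v (a i)) (a j))
        = wgram y (Fin.snoc (Fin.snoc v (a i)) (h j)) := by
      have := wgram_snoc_add_span y (Fin.snoc v (a i)) (h j) (a j - h j)
        (Submodule.span_mono (range_subset_snoc v (a i)) (hmem j))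
      rwa [ej] at this
    have step2 : wgram y (Fin.snoc (Fin.snoc v (h j)) (a i))
        = wgram y (Fin.snoc (Fin.snoc v (h j)) (h i)) := by
      have := wgram_snoc_add_span y (Fin.snoc v (h j)) (h i) (a i - h i)
        (Submodule.span_mono (range_subset_snoc v (h j)) (hmem i))
      rwa [ei] at this
    rw [step1, wgram_snoc_swap, step2, wgram_snoc_swap,
      wgram_snoc_snoc_orth y v (h i) (h j) (horth i) (horth j),
      wip_comm y (h j) (h i)]
    ring
  refine ⟨?_, key2, fun i j => ?_⟩
  · -- part (i)
    have hsum : (∑ i, a i) = (∑ i, h i) + ∑ i, (a i - h i) := by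
      rw [← Finset.sum_add_distrib]
      exact Finset.sum_congr rfl fun i _ => by abel
    have horthsum : ∀ j, wip y (∑ i, h i) (v j) = 0 := by
      intro j
      rw [wip_sum_left]
      simp [horth]
    rw [hsum, wgram_snoc_add_span y v (∑ i, h i) _
        (Submodule.sum_mem _ fun i _ => hmem i),
      wgram_snoc_orth y v _ horthsum, wip_sum_left]
    have expand : (∑ i, wip y (h i) (∑ j, h j))
        = ∑ i, ∑ j, wip y (h i) (h j) :=
      Finset.sum_congr rfl fun i _ => wip_sum_right _ _ _ _
    rw [expand, sym_double_sum (fun i j => wip y (h i) (h j))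
        (fun i j => wip_comm y (h i) (h j))]
    have : (∑ i, wgram y (Fin.snoc v (a i)))
        = ∑ i, wgram y v * wip y (h i) (h i) :=
      Finset.sum_congr rfl fun i _ => key1 i
    rw [this, ← Finset.mul_sum]
    ring
  · -- part (iii)
    rw [key2 i j, key1 i, key1 j]
    ring
end

section
/- (Invariance on the exchange graph) Let M = (E, I) be a matroid and G its exchange graph on vertex set I × I, where (I₁,I₂) and (I₁',I₂') are adjacent iff there is i ∈ E with {I₁' = I₁+i, I₂' = I₂−i} or {I₁' = I₁−i, I₂' = I₂+i}. Then along any connected component of G, the multiset I ⊎ J and the maximal codependent pair MCP(I,J) are invariant. -/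
/-- Adjacency in the exchange graph of a matroid: both vertices are pairs of independent
sets, and one is obtained from the other by moving a single element between the
coordinates. -/
def exchAdj {α : Type*} (M : Matroid α) (v w : Set α × Set α) : Prop :=
  M.Indep v.1 ∧ M.Indep v.2 ∧ M.Indep w.1 ∧ M.Indep w.2 ∧
    ∃ i, (i ∉ v.1 ∧ i ∈ v.2 ∧ w.1 = insert i v.1 ∧ w.2 = v.2 \ {i}) ∨
         (i ∈ v.1 ∧ i ∉ v.2 ∧ w.1 = v.1 \ {i} ∧ w.2 = insert i v.2)

/-- `(U,V)` is a codependent pair of `(I,J)`: `U ⊆ I`, `V ⊆ J` and `cl(U) = cl(V)`. -/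
def CodepPair {α : Type*} (M : Matroid α) (I J U V : Set α) : Prop :=
  U ⊆ I ∧ V ⊆ J ∧ M.closure U = M.closure V

/-- `(U,V)` is the maximal codependent pair `MCP(I,J)`. -/
def IsMCP {α : Type*} (M : Matroid α) (I J U V : Set α) : Prop :=
  CodepPair M I J U V ∧ ∀ U' V', CodepPair M I J U' V' → U' ⊆ U ∧ V' ⊆ V

lemma codep_move {α : Type*} (M : Matroid α) {I J : Set α} {i : α}
    (hI' : M.Indep (insert i I)) (hiI : i ∉ I) (hJ : M.Indep J) (hiJ : i ∈ J)
    (U V : Set α) :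
    CodepPair M I J U V ↔ CodepPair M (insert i I) (J \ {i}) U V := by
  have hicl : i ∉ M.closure I := by
    have := (hI'.subset (Set.subset_insert i I)).insert_indep_iff_of_notMem hiI
    exact ((this.1 hI').2 : i ∉ M.closure I)
  constructor
  · rintro ⟨hU, hV, hcl⟩
    have hiV : i ∉ V := by
      intro hiV
      have : i ∈ M.closure V := M.mem_closure_of_mem' hiV (hJ.subset_ground hiJ)
      rw [← hcl] at this
      exact hicl (M.closure_subset_closure hU this)
    exact ⟨hU.trans (Set.subset_insert i I), fun x hx => ⟨hV hx, fun h => hiV (h ▸ hx)⟩, hcl⟩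
  · rintro ⟨hU, hV, hcl⟩
    have hiU : i ∉ U := by
      intro hiU
      have h1 : i ∈ M.closure V := by
        rw [← hcl]
        exact M.mem_closure_of_mem' hiU (hI'.subset_ground (Set.mem_insert i I))
      have h2 : i ∈ M.closure (J \ {i}) := M.closure_subset_closure hV h1
      exact hJ.notMem_closure_diff_of_mem hiJ h2
    refine ⟨fun x hx => ?_, hV.trans Set.diff_subset, hcl⟩
    rcases hU hx with h | h
    · exact absurd (h ▸ hx) hiU
    · exact h

lemma codep_swap {α : Type*} (M : Matroid α) (I J U V : Set α) :
    CodepPair M I J U V ↔ CodepPair M J I V U := by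
  constructor <;> rintro ⟨h1, h2, h3⟩ <;> exact ⟨h2, h1, h3.symm⟩

lemma exchAdj_step {α : Type*} (M : Matroid α) {v w : Set α × Set α}
    (h : exchAdj M v w) :
    v.1 ∪ v.2 = w.1 ∪ w.2 ∧ v.1 ∩ v.2 = w.1 ∩ w.2 ∧
      ∀ U V, CodepPair M v.1 v.2 U V ↔ CodepPair M w.1 w.2 U V := by
  obtain ⟨h1, h2, h3, h4, i, ⟨hi1, hi2, e1, e2⟩ | ⟨hi1, hi2, e1, e2⟩⟩ := h
  · refine ⟨?_, ?_, fun U V => ?_⟩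
    · rw [e1, e2]; ext x
      simp only [Set.mem_union, Set.mem_insert_iff, Set.mem_diff, Set.mem_singleton_iff]
      constructor
      · rintro (h | h); · exact Or.inl (Or.inr h)
        rcases eq_or_ne x i with rfl | hne
        · exact Or.inl (Or.inl rfl)
        · exact Or.inr ⟨h, hne⟩
      · rintro ((rfl | h) | ⟨h, _⟩); · exact Or.inr hi2
        · exact Or.inl h
        · exact Or.inr h
    · rw [e1, e2]; ext x
      simp only [Set.mem_inter_iff, Set.mem_insert_iff, Set.mem_diff, Set.mem_singleton_iff]
      constructor
      · rintro ⟨hx1, hx2⟩; exact ⟨Or.inr hx1, hx2, fun h => hi1 (h ▸ hx1)⟩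
      · rintro ⟨rfl | hx1, hx2, hne⟩; · exact absurd rfl hne
        exact ⟨hx1, hx2⟩
    · rw [e1, e2]
      rw [e1] at h3
      exact codep_move M h3 hi1 h2 hi2 U V
  · refine ⟨?_, ?_, fun U V => ?_⟩
    · rw [e1, e2]; ext x
      simp only [Set.mem_union, Set.mem_insert_iff, Set.mem_diff, Set.mem_singleton_iff]
      constructor
      · rintro (h | h)
        · rcases eq_or_ne x i with rfl | hne
          · exact Or.inr (Or.inl rfl)
          · exact Or.inl ⟨h, hne⟩
        · exact Or.inr (Or.inr h)
      · rintro (⟨h, _⟩ | (rfl | h)); · exact Or.inl h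
        · exact Or.inl hi1
        · exact Or.inr h
    · rw [e1, e2]; ext x
      simp only [Set.mem_inter_iff, Set.mem_insert_iff, Set.mem_diff, Set.mem_singleton_iff]
      constructor
      · rintro ⟨hx1, hx2⟩; exact ⟨⟨hx1, fun h => hi2 (h ▸ hx2)⟩, Or.inr hx2⟩
      · rintro ⟨⟨hx1, hne⟩, rfl | hx2⟩; · exact absurd rfl hne
        exact ⟨hx1, hx2⟩
    · rw [e1, e2, codep_swap, codep_swap M (v.1 \ {i})]
      rw [e2] at h4
      exact codep_move M h4 hi2 h1 hi1 V U

/-- along any connected component of the exchange graph, the multiset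
`I ⊎ J` (equivalently, the pair `(I ∪ J, I ∩ J)`, multiplicities being at most two) and
the maximal codependent pair `MCP(I,J)` are invariant. -/
theorem exchange_graph_invariants {α : Type*} (M : Matroid α)
    (v w : Set α × Set α)
    (hreach : Relation.ReflTransGen (exchAdj M) v w) :
    v.1 ∪ v.2 = w.1 ∪ w.2 ∧ v.1 ∩ v.2 = w.1 ∩ w.2 ∧
      ∀ U V, IsMCP M v.1 v.2 U V ↔ IsMCP M w.1 w.2 U V := by
  induction hreach with
  | refl => exact ⟨rfl, rfl, fun U V => Iff.rfl⟩
  | tail hab hbc ih =>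
    obtain ⟨u1, u2, hcd⟩ := exchAdj_step M hbc
    refine ⟨ih.1.trans u1, ih.2.1.trans u2, fun U V => (ih.2.2 U V).trans ?_⟩
    unfold IsMCP
    constructor <;> rintro ⟨h1, h2⟩
    · exact ⟨(hcd U V).1 h1, fun U' V' h => h2 U' V' ((hcd U' V').2 h)⟩
    · exact ⟨(hcd U V).2 h1, fun U' V' h => h2 U' V' ((hcd U' V').1 h)⟩
end

section
/- (Isolated vertices of the exchange graph) Let M = (E,I) be a matroid with exchange graph G. A vertex (I,J) ∈ I × I is isolated in G if and only if cl(I) = cl(J). Moreover, in the bipartite subgraph G_{p,q} induced on (I_p × I_q) ⊔ (I_{p−1} × I_{q+1}) (with 1 ≤ p ≤ r, 0 ≤ q ≤ r−1), a vertex (I,J) ∈ I_p × I_q is isolated iff I ⊆ cl(J); in particular, if p = q+1 then G_{p,q} has no isolated vertex. -/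
open Set

/-- The vertex `v` belongs to the part `I_p × I_q` of the exchange graph. -/
def inPart {α : Type*} (M : Matroid α) (p q : ℕ) (v : Set α × Set α) : Prop :=
  M.Indep v.1 ∧ M.Indep v.2 ∧ v.1.ncard = p ∧ v.2.ncard = q

private lemma not_subset_closure_iff {α : Type*} {M : Matroid α} {I J : Set α}
    (hI : M.Indep I) (hJ : M.Indep J) :
    ¬ I ⊆ M.closure J ↔ ∃ i ∈ I, i ∉ J ∧ M.Indep (insert i J) := by
  rw [Set.not_subset]
  constructor
  · rintro ⟨i, hiI, hic⟩
    have hiE : i ∈ M.E := hI.subset_ground hiI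
    rw [hJ.notMem_closure_iff hiE] at hic
    exact ⟨i, hiI, hic.2, hic.1⟩
  · rintro ⟨i, hiI, hiJ, hind⟩
    have hiE : i ∈ M.E := hI.subset_ground hiI
    exact ⟨i, hiI, (hJ.notMem_closure_iff hiE).2 ⟨hind, hiJ⟩⟩

/-- isolated vertices of the exchange graph:
(1) a vertex `(I,J)` is isolated in `G` iff `cl(I) = cl(J)`;
(2) a vertex `(I,J) ∈ I_p × I_q` is isolated in the bipartite subgraph `G_{p,q}`
(on `(I_p × I_q) ⊔ (I_{p−1} × I_{q+1})`) iff `I ⊆ cl(J)`, and a vertex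
`(J,I) ∈ I_{p−1} × I_{q+1}` is isolated in `G_{p,q}` iff `I ⊆ cl(J)`;
(3) if `p = q + 1` then `G_{p,q}` has no isolated vertex. -/
theorem exchange_graph_isolated_vertices {α : Type*} (M : Matroid α) [M.Finite]
    (p q : ℕ) (hp : 1 ≤ p) :
    (∀ I J : Set α, M.Indep I → M.Indep J →
      ((¬ ∃ w : Set α × Set α, exchAdj M (I, J) w) ↔ M.closure I = M.closure J)) ∧
    (∀ I J : Set α, M.Indep I → M.Indep J → I.ncard = p → J.ncard = q →
      ((¬ ∃ w : Set α × Set α, inPart M (p - 1) (q + 1) w ∧ exchAdj M (I, J) w) ↔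
        I ⊆ M.closure J)) ∧
    (∀ J I : Set α, M.Indep J → M.Indep I → J.ncard = p - 1 → I.ncard = q + 1 →
      ((¬ ∃ w : Set α × Set α, inPart M p q w ∧ exchAdj M (J, I) w) ↔
        I ⊆ M.closure J)) ∧
    (p = q + 1 → ∀ I J : Set α, M.Indep I → M.Indep J → I.ncard = p → J.ncard = q →
      ∃ w : Set α × Set α, inPart M (p - 1) (q + 1) w ∧ exchAdj M (I, J) w) := by
  have move₂ : ∀ I J : Set α, M.Indep I → M.Indep J → I.ncard = p → J.ncard = q →
      ∀ i ∈ I, i ∉ J → M.Indep (insert i J) →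
      ∃ w : Set α × Set α, inPart M (p - 1) (q + 1) w ∧ exchAdj M (I, J) w := by
    intro I J hI hJ hIc hJc i hiI hiJ hins
    refine ⟨(I \ {i}, insert i J), ⟨hI.subset diff_subset, hins, ?_, ?_⟩,
      hI, hJ, hI.subset diff_subset, hins, i, Or.inr ⟨hiI, hiJ, rfl, rfl⟩⟩
    · simp [Set.ncard_diff_singleton_of_mem hiI, hIc]
    · simp [Set.ncard_insert_of_notMem hiJ hJ.finite, hJc]
  refine ⟨?_, ?_, ?_, ?_⟩
  · -- part 1
    intro I J hI hJ
    constructor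
    · intro hiso
      by_contra hne
      rcases (em (I ⊆ M.closure J)) with hIJ | hIJ
      · have hclIJ : M.closure I ⊆ M.closure J := by
          simpa using M.closure_subset_closure hIJ
        have hJI : ¬ J ⊆ M.closure I := by
          intro hJI
          exact hne (hclIJ.antisymm (by simpa using M.closure_subset_closure hJI))
        obtain ⟨j, hjJ, hjI, hins⟩ := (not_subset_closure_iff hJ hI).1 hJI
        exact hiso ⟨(insert j I, J \ {j}),
          hI, hJ, hins, hJ.subset diff_subset, j, Or.inl ⟨hjI, hjJ, rfl, rfl⟩⟩
      · obtain ⟨i, hiI, hiJ, hins⟩ := (not_subset_closure_iff hI hJ).1 hIJ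
        exact hiso ⟨(I \ {i}, insert i J),
          hI, hJ, hI.subset diff_subset, hins, i, Or.inr ⟨hiI, hiJ, rfl, rfl⟩⟩
    · rintro hcl ⟨w, hI', hJ', hw1, hw2, i, h | h⟩
      · obtain ⟨hiI, hiJ, he1, he2⟩ := h
        rw [he1] at hw1
        have : i ∉ M.closure I :=
          (hI.notMem_closure_iff (hJ.subset_ground hiJ)).2 ⟨hw1, hiI⟩
        exact this (hcl ▸ M.subset_closure J hJ.subset_ground hiJ)
      · obtain ⟨hiI, hiJ, he1, he2⟩ := h
        rw [he2] at hw2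
        have : i ∉ M.closure J :=
          (hJ.notMem_closure_iff (hI.subset_ground hiI)).2 ⟨hw2, hiJ⟩
        exact this (hcl ▸ M.subset_closure I hI.subset_ground hiI)
  · -- part 2
    intro I J hI hJ hIc hJc
    constructor
    · intro hiso
      by_contra hIJ
      obtain ⟨i, hiI, hiJ, hins⟩ := (not_subset_closure_iff hI hJ).1 hIJ
      exact hiso (move₂ I J hI hJ hIc hJc i hiI hiJ hins)
    · rintro hcl ⟨w, ⟨hwi1, hwi2, hwc1, hwc2⟩, hI', hJ', hw1, hw2, i, h | h⟩
      · obtain ⟨hiI, hiJ, he1, he2⟩ := h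
        rw [he1] at hwc1
        rw [Set.ncard_insert_of_notMem hiI hI.finite, hIc] at hwc1
        omega
      · obtain ⟨hiI, hiJ, he1, he2⟩ := h
        rw [he2] at hw2
        have : i ∉ M.closure J :=
          (hJ.notMem_closure_iff (hI.subset_ground hiI)).2 ⟨hw2, hiJ⟩
        exact this (hcl hiI)
  · -- part 3
    intro J I hJ hI hJc hIc
    constructor
    · intro hiso
      by_contra hIJ
      obtain ⟨i, hiI, hiJ, hins⟩ := (not_subset_closure_iff hI hJ).1 hIJ
      refine hiso ⟨(insert i J, I \ {i}), ⟨hins, hI.subset diff_subset, ?_, ?_⟩,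
        hJ, hI, hins, hI.subset diff_subset, i, Or.inl ⟨hiJ, hiI, rfl, rfl⟩⟩
      · rw [Set.ncard_insert_of_notMem hiJ hJ.finite, hJc]; omega
      · rw [Set.ncard_diff_singleton_of_mem hiI, hIc]; omega
    · rintro hcl ⟨w, ⟨hwi1, hwi2, hwc1, hwc2⟩, hJ', hI', hw1, hw2, i, h | h⟩
      · obtain ⟨hiJ, hiI, he1, he2⟩ := h
        rw [he1] at hw1
        have : i ∉ M.closure J :=
          (hJ.notMem_closure_iff (hI.subset_ground hiI)).2 ⟨hw1, hiJ⟩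
        exact this (hcl hiI)
      · obtain ⟨hiJ, hiI, he1, he2⟩ := h
        rw [he1] at hwc1
        rw [Set.ncard_diff_singleton_of_mem hiJ, hJc] at hwc1
        have h1 : 0 < J.ncard := (Set.ncard_pos hJ.finite).2 ⟨i, hiJ⟩
        rw [hJc] at h1
        omega
  · -- part 4
    intro hpq I J hI hJ hIc hJc
    have hlt : J.encard < I.encard := by
      rw [← hJ.finite.cast_ncard_eq, ← hI.finite.cast_ncard_eq, hIc, hJc, hpq]
      exact_mod_cast Nat.lt_succ_self q
    obtain ⟨i, hi, hins⟩ := hJ.augment hI hlt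
    exact move₂ I J hI hJ hIc hJc i hi.1 hi.2 hins
end

section
/- (Stability of Symanzik rational fractions, order 2) Let v be a linearly independent family of n vectors in ℝᵖ, a ∈ ℝᵖ independent from v, and w = v ⋆ (a). Let y(t) = (y₁(t),…,y_n(t)) be positive functions of a parameter t, Y(t) = diag(y(t)), and Z(t) a bounded family of symmetric n×n matrices such that Vᵀ(Y(t)+Z(t))V is positive definite whenever the y_i(t) are large. Then there exist constants c, C > 0 such that whenever y₁(t),…,y_n(t) ≥ C, | det(Wᵀ Y(t) W)/det(Vᵀ Y(t) V) − det(Wᵀ(Y(t)+Z(t))W)/det(Vᵀ(Y(t)+Z(t))V) | ≤ c. -/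
open Matrix

lemma step1 {n p : ℕ} (V U : Matrix (Fin n) (Fin p) ℝ) (y : Fin n → ℝ) :
    (Vᵀ * Matrix.diagonal y * U).det
      = ∑ r : Fin p → Fin n, (∏ j, V (r j) j * y (r j)) * (U.submatrix r id).det := by
  have hM : Vᵀ * Matrix.diagonal y * U
      = Matrix.of (fun j => ∑ i, (V i j * y i) • U i) := by
    ext j l
    simp [Matrix.mul_apply, Matrix.diagonal_apply, Finset.sum_apply, mul_assoc,
      ite_mul, zero_mul, mul_ite, mul_zero, Finset.sum_ite_eq, Finset.sum_ite_eq']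
  rw [hM]
  have h := (Matrix.detRowAlternating :
      (Fin p → ℝ) [⋀^Fin p]→ₗ[ℝ] ℝ).toMultilinearMap.map_sum
      (fun j i => (V i j * y i) • U i)
  calc (Matrix.of (fun j => ∑ i, (V i j * y i) • U i)).det
      = (Matrix.detRowAlternating : (Fin p → ℝ) [⋀^Fin p]→ₗ[ℝ] ℝ).toMultilinearMap
          (fun j => ∑ i, (V i j * y i) • U i) := rfl
    _ = ∑ r : Fin p → Fin n, (Matrix.detRowAlternating :
          (Fin p → ℝ) [⋀^Fin p]→ₗ[ℝ] ℝ).toMultilinearMap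
          (fun j => (V (r j) j * y (r j)) • U (r j)) := h
    _ = ∑ r : Fin p → Fin n, (∏ j, V (r j) j * y (r j)) * (U.submatrix r id).det := by
        refine Finset.sum_congr rfl (fun r _ => ?_)
        rw [MultilinearMap.map_smul_univ]
        rfl

lemma det_weighted_gram_aux {n p : ℕ} (V U : Matrix (Fin n) (Fin p) ℝ) (y : Fin n → ℝ)
    (h1 : (Vᵀ * Matrix.diagonal y * U).det
      = ∑ r : Fin p → Fin n, (∏ j, V (r j) j * y (r j)) * (U.submatrix r id).det) :
    (p.factorial : ℝ) * (Vᵀ * Matrix.diagonal y * U).det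
      = ∑ r : Fin p → Fin n,
          (∏ j, y (r j)) * ((V.submatrix r id).det * (U.submatrix r id).det) := by
  have key : ∀ τ : Equiv.Perm (Fin p),
      (Vᵀ * Matrix.diagonal y * U).det
        = ∑ r : Fin p → Fin n,
            (∏ j, y (r j)) * (((Equiv.Perm.sign τ : ℤ) : ℝ)
              * (∏ j, V (r (τ j)) j) * (U.submatrix r id).det) := by
    intro τ
    rw [h1]
    refine Fintype.sum_equiv (Equiv.arrowCongr τ (Equiv.refl (Fin n))) _ _ (fun r => ?_)
    have hc : (Equiv.arrowCongr τ (Equiv.refl (Fin n))) r = r ∘ ⇑τ.symm := rfl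
    rw [hc]
    simp only [Function.comp_apply, Equiv.symm_apply_apply]
    have hy2 : (∏ j, y (r (τ.symm j))) = ∏ j, y (r j) :=
      Equiv.prod_comp τ.symm (fun j => y (r j))
    have hdet : (U.submatrix (r ∘ ⇑τ.symm) id).det
        = ((Equiv.Perm.sign τ : ℤ) : ℝ) * (U.submatrix r id).det := by
      have hsub : U.submatrix (r ∘ ⇑τ.symm) id = (U.submatrix r id).submatrix ⇑τ.symm id := by
        rw [Matrix.submatrix_submatrix]; rfl
      rw [hsub, Matrix.det_permute]
      simp
    rw [hy2, hdet, Finset.prod_mul_distrib]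
    have hs : ((Equiv.Perm.sign τ : ℤ) : ℝ) * ((Equiv.Perm.sign τ : ℤ) : ℝ) = 1 := by
      rw [← Int.cast_mul, ← Units.val_mul, Int.units_mul_self]; norm_num
    linear_combination
      (-((∏ j, y (r j)) * (∏ j, V (r j) j) * (U.submatrix r id).det)) * hs
  have hsum : ∑ τ : Equiv.Perm (Fin p), (Vᵀ * Matrix.diagonal y * U).det
      = (p.factorial : ℝ) * (Vᵀ * Matrix.diagonal y * U).det := by
    rw [Finset.sum_const, Finset.card_univ, Fintype.card_perm, Fintype.card_fin,
      nsmul_eq_mul]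
  rw [← hsum]
  calc ∑ τ : Equiv.Perm (Fin p), (Vᵀ * Matrix.diagonal y * U).det
      = ∑ τ : Equiv.Perm (Fin p), ∑ r : Fin p → Fin n,
          (∏ j, y (r j)) * (((Equiv.Perm.sign τ : ℤ) : ℝ)
            * (∏ j, V (r (τ j)) j) * (U.submatrix r id).det) := by
        exact Finset.sum_congr rfl (fun τ _ => key τ)
    _ = ∑ r : Fin p → Fin n, ∑ τ : Equiv.Perm (Fin p),
          (∏ j, y (r j)) * (((Equiv.Perm.sign τ : ℤ) : ℝ)
            * (∏ j, V (r (τ j)) j) * (U.submatrix r id).det) := Finset.sum_comm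
    _ = ∑ r : Fin p → Fin n,
          (∏ j, y (r j)) * ((V.submatrix r id).det * (U.submatrix r id).det) := by
        refine Finset.sum_congr rfl (fun r _ => ?_)
        rw [← Finset.mul_sum]
        congr 1
        rw [← Finset.sum_mul]
        congr 1
        rw [Matrix.det_apply']
        refine Finset.sum_congr rfl (fun τ _ => ?_)
        simp [Matrix.submatrix_apply]

lemma gram_posdef {n p : ℕ} (V : Matrix (Fin n) (Fin p) ℝ)
    (hV : LinearIndependent ℝ (fun j => Vᵀ j)) (y : Fin n → ℝ) (hy : ∀ i, 0 < y i) :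
    (Vᵀ * Matrix.diagonal y * V).PosDef := by
  rw [Matrix.posDef_iff_dotProduct_mulVec]
  constructor
  · show (Vᵀ * Matrix.diagonal y * V)ᴴ = _
    have : (Vᵀ * Matrix.diagonal y * V)ᴴ = (Vᵀ * Matrix.diagonal y * V)ᵀ := rfl
    rw [this, Matrix.transpose_mul, Matrix.transpose_mul, Matrix.transpose_transpose,
      Matrix.diagonal_transpose, Matrix.mul_assoc]
  · intro x hx
    have hVx : V *ᵥ x ≠ 0 := by
      intro h0
      apply hx
      have := Fintype.linearIndependent_iff.mp hV x ?_
      · funext j; exact this j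
      · funext i
        have : (V *ᵥ x) i = 0 := by rw [h0]; rfl
        simpa [Matrix.mulVec, dotProduct, Finset.sum_apply, mul_comm] using this
    have hq : dotProduct (star x) ((Vᵀ * Matrix.diagonal y * V) *ᵥ x)
        = ∑ i, y i * (V *ᵥ x) i ^ 2 := by
      rw [show star x = x from rfl]
      rw [Matrix.mul_assoc, ← Matrix.mulVec_mulVec, ← Matrix.mulVec_mulVec,
        Matrix.dotProduct_mulVec, Matrix.vecMul_transpose]
      simp [Matrix.mulVec_diagonal, dotProduct]
      refine Finset.sum_congr rfl (fun i _ => by ring)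
    rw [hq]
    obtain ⟨i0, hi0⟩ := Function.ne_iff.mp hVx
    refine Finset.sum_pos' (fun i _ => mul_nonneg (hy i).le (sq_nonneg _)) ⟨i0, Finset.mem_univ i0, ?_⟩
    have hne : (V *ᵥ x) i0 ≠ 0 := by simpa using hi0
    exact mul_pos (hy i0) (lt_of_le_of_ne (sq_nonneg _) (Ne.symm (pow_ne_zero 2 hne)))


lemma det_ratio_bound {n p : ℕ} (V U : Matrix (Fin n) (Fin p) ℝ) (y : Fin n → ℝ)
    (hy : ∀ i, 0 < y i) :
    |(Vᵀ * Matrix.diagonal y * U).det|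
      ≤ (∑ r : Fin p → Fin n, |(U.submatrix r id).det| / |(V.submatrix r id).det|)
        * (Vᵀ * Matrix.diagonal y * V).det := by
  set κ := ∑ r : Fin p → Fin n, |(U.submatrix r id).det| / |(V.submatrix r id).det| with hκ
  have hκ0 : ∀ r : Fin p → Fin n,
      0 ≤ |(U.submatrix r id).det| / |(V.submatrix r id).det| :=
    fun r => div_nonneg (abs_nonneg _) (abs_nonneg _)
  have hU := det_weighted_gram_aux V U y (step1 V U y)
  have hV := det_weighted_gram_aux V V y (step1 V V y)
  have hpf : (0:ℝ) < (p.factorial : ℝ) := by exact_mod_cast p.factorial_pos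
  have key : (p.factorial : ℝ) * |(Vᵀ * Matrix.diagonal y * U).det|
      ≤ κ * ((p.factorial : ℝ) * (Vᵀ * Matrix.diagonal y * V).det) := by
    calc (p.factorial : ℝ) * |(Vᵀ * Matrix.diagonal y * U).det|
        = |(p.factorial : ℝ) * (Vᵀ * Matrix.diagonal y * U).det| := by
          rw [abs_mul, abs_of_pos hpf]
      _ = |∑ r : Fin p → Fin n,
            (∏ j, y (r j)) * ((V.submatrix r id).det * (U.submatrix r id).det)| := by rw [hU]
      _ ≤ ∑ r : Fin p → Fin n,
            |(∏ j, y (r j)) * ((V.submatrix r id).det * (U.submatrix r id).det)| :=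
          Finset.abs_sum_le_sum_abs _ _
      _ ≤ ∑ r : Fin p → Fin n,
            κ * ((∏ j, y (r j)) * (V.submatrix r id).det ^ 2) := by
          refine Finset.sum_le_sum (fun r _ => ?_)
          have hyr : 0 ≤ ∏ j, y (r j) := Finset.prod_nonneg (fun j _ => (hy (r j)).le)
          have hq : |(U.submatrix r id).det| / |(V.submatrix r id).det| ≤ κ :=
            Finset.single_le_sum (fun r _ => hκ0 r) (Finset.mem_univ r)
          have hterm : |(V.submatrix r id).det * (U.submatrix r id).det|
              ≤ κ * (V.submatrix r id).det ^ 2 := by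
            by_cases hdV : (V.submatrix r id).det = 0
            · simp [hdV]
            · have : |(V.submatrix r id).det * (U.submatrix r id).det|
                  = (|(U.submatrix r id).det| / |(V.submatrix r id).det|)
                    * (V.submatrix r id).det ^ 2 := by
                rw [abs_mul, ← sq_abs]
                field_simp [abs_ne_zero.mpr hdV]
              rw [this]
              exact mul_le_mul_of_nonneg_right hq (sq_nonneg _)
          calc |(∏ j, y (r j)) * ((V.submatrix r id).det * (U.submatrix r id).det)|
              = (∏ j, y (r j)) * |(V.submatrix r id).det * (U.submatrix r id).det| := by
                rw [abs_mul, abs_of_nonneg hyr]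
            _ ≤ (∏ j, y (r j)) * (κ * (V.submatrix r id).det ^ 2) :=
                mul_le_mul_of_nonneg_left hterm hyr
            _ = κ * ((∏ j, y (r j)) * (V.submatrix r id).det ^ 2) := by ring
      _ = κ * ((p.factorial : ℝ) * (Vᵀ * Matrix.diagonal y * V).det) := by
          rw [← Finset.mul_sum, hV]
          congr 1
          exact Finset.sum_congr rfl (fun r _ => by ring)
  have := (mul_le_mul_iff_right₀ hpf).mp (by linarith [key] : (p.factorial : ℝ) *
    |(Vᵀ * Matrix.diagonal y * U).det| ≤ (p.factorial : ℝ) *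
      (κ * (Vᵀ * Matrix.diagonal y * V).det))
  exact this


lemma x_entry_bound {n p : ℕ} (V : Matrix (Fin n) (Fin p) ℝ) (a : Fin n → ℝ)
    (y : Fin n → ℝ) (hy : ∀ i, 0 < y i)
    (hdet : 0 < (Vᵀ * Matrix.diagonal y * V).det) (k : Fin p) :
    |((Vᵀ * Matrix.diagonal y * V)⁻¹ *ᵥ (Vᵀ *ᵥ (Matrix.diagonal y *ᵥ a))) k|
      ≤ ∑ r : Fin p → Fin n,
          |((V.updateCol k a).submatrix r id).det| / |(V.submatrix r id).det| := by
  set M := Vᵀ * Matrix.diagonal y * V with hM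
  set b := Vᵀ *ᵥ (Matrix.diagonal y *ᵥ a) with hb
  have hu : IsUnit M.det := isUnit_iff_ne_zero.mpr hdet.ne'
  have hcr : Matrix.cramer M b = M.det • (M⁻¹ *ᵥ b) := by
    have h1 : M *ᵥ Matrix.cramer M b = M.det • b := Matrix.mulVec_cramer M b
    have h2 : M⁻¹ *ᵥ (M *ᵥ Matrix.cramer M b) = Matrix.cramer M b := by
      rw [Matrix.mulVec_mulVec, Matrix.nonsing_inv_mul M hu, Matrix.one_mulVec]
    rw [← h2, h1, Matrix.mulVec_smul]
  have hxk : (M⁻¹ *ᵥ b) k = (M.updateCol k b).det / M.det := by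
    have := congrFun hcr k
    rw [Matrix.cramer_apply] at this
    rw [this]
    simp only [Pi.smul_apply, smul_eq_mul]
    field_simp
  have hupd : M.updateCol k b = Vᵀ * Matrix.diagonal y * (V.updateCol k a) := by
    ext j l
    by_cases hl : l = k
    · subst hl
      simp [Matrix.updateCol_apply, hb, Matrix.mul_apply, Matrix.mulVec,
        Matrix.diagonal_apply, dotProduct, Finset.sum_apply, ite_mul, zero_mul,
        mul_ite, mul_zero, Finset.sum_ite_eq, Finset.sum_ite_eq', mul_assoc]
    · simp [Matrix.updateCol_apply, hl, hM, Matrix.mul_apply, Matrix.diagonal_apply,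
        ite_mul, zero_mul, mul_ite, mul_zero, Finset.sum_ite_eq, Finset.sum_ite_eq']
  rw [hxk, hupd, abs_div, abs_of_pos hdet, div_le_iff₀ hdet]
  exact det_ratio_bound V (V.updateCol k a) y hy

/-- Append the column `a` to the matrix `V` : this is the matrix `W = V ⋆ (a)`. -/
def snocCol {n p : ℕ} (V : Matrix (Fin n) (Fin p) ℝ) (a : Fin n → ℝ) :
    Matrix (Fin n) (Fin (p + 1)) ℝ :=
  Matrix.of fun i => Fin.snoc (V i) (a i)

lemma snocCol_castAdd {n p : ℕ} (V : Matrix (Fin n) (Fin p) ℝ) (a : Fin n → ℝ)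
    (i : Fin n) (j : Fin p) : snocCol V a i (Fin.castAdd 1 j) = V i j := by
  have : Fin.castAdd 1 j = Fin.castSucc j := rfl
  rw [snocCol, Matrix.of_apply, this, Fin.snoc_castSucc]

lemma snocCol_natAdd {n p : ℕ} (V : Matrix (Fin n) (Fin p) ℝ) (a : Fin n → ℝ)
    (i : Fin n) (j : Fin 1) : snocCol V a i (Fin.natAdd p j) = a i := by
  have : Fin.natAdd p j = Fin.last p := by
    ext
    simp [Fin.natAdd, Fin.last, Fin.ext_iff, Subsingleton.elim j 0]
  rw [snocCol, Matrix.of_apply, this, Fin.snoc_last]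

lemma det_snoc_schur {n p : ℕ} (V : Matrix (Fin n) (Fin p) ℝ) (a : Fin n → ℝ)
    (A : Matrix (Fin n) (Fin n) ℝ) (hA : Aᵀ = A)
    (hu : IsUnit (Vᵀ * A * V).det) :
    ((snocCol V a)ᵀ * A * snocCol V a).det
      = (Vᵀ * A * V).det
        * (a ⬝ᵥ (A *ᵥ a)
          - (Vᵀ *ᵥ (A *ᵥ a)) ⬝ᵥ ((Vᵀ * A * V)⁻¹ *ᵥ (Vᵀ *ᵥ (A *ᵥ a)))) := by
  set M := Vᵀ * A * V with hM
  set b := Vᵀ *ᵥ (A *ᵥ a) with hb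
  have hAsymm : ∀ i i', A i i' = A i' i := fun i i' => by
    conv_lhs => rw [← hA]
    rfl
  have hsub : ((snocCol V a)ᵀ * A * snocCol V a).submatrix
        (finSumFinEquiv (m := p) (n := 1)) (finSumFinEquiv (m := p) (n := 1))
      = Matrix.fromBlocks M (Matrix.of fun j (_ : Fin 1) => b j)
          (Matrix.of fun (_ : Fin 1) j => b j)
          (Matrix.of fun (_ : Fin 1) (_ : Fin 1) => a ⬝ᵥ (A *ᵥ a)) := by
    ext i j
    cases' i with i i <;> cases' j with j j <;>
      simp only [Matrix.submatrix_apply, finSumFinEquiv_apply_left,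
        finSumFinEquiv_apply_right, Matrix.fromBlocks_apply₁₁, Matrix.fromBlocks_apply₁₂,
        Matrix.fromBlocks_apply₂₁, Matrix.fromBlocks_apply₂₂, Matrix.of_apply,
        hM, hb, Matrix.mul_apply, Matrix.transpose_apply, Matrix.mulVec, dotProduct,
        Finset.sum_mul, Finset.mul_sum, snocCol_castAdd, snocCol_natAdd]
    · rw [Finset.sum_comm]
      exact Finset.sum_congr rfl fun i' _ => Finset.sum_congr rfl fun i'' _ => by ring
    · exact Finset.sum_congr rfl fun i' _ => Finset.sum_congr rfl fun i'' _ => by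
        rw [hAsymm i'' i']; ring
    · exact Finset.sum_congr rfl fun i' _ => Finset.sum_congr rfl fun i'' _ => by
        rw [hAsymm i'' i']; ring
  have hdet1 : ((snocCol V a)ᵀ * A * snocCol V a).det
      = (Matrix.fromBlocks M (Matrix.of fun j (_ : Fin 1) => b j)
          (Matrix.of fun (_ : Fin 1) j => b j)
          (Matrix.of fun (_ : Fin 1) (_ : Fin 1) => a ⬝ᵥ (A *ᵥ a))).det := by
    rw [← hsub, Matrix.det_submatrix_equiv_self]
  haveI : Invertible M := M.invertibleOfIsUnitDet hu
  rw [hdet1, Matrix.det_fromBlocks₁₁]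
  congr 1
  rw [Matrix.det_fin_one]
  simp only [Matrix.sub_apply, Matrix.of_apply, Matrix.invOf_eq_nonsing_inv,
    Matrix.mul_apply, Matrix.mulVec, dotProduct, Finset.mul_sum, Finset.sum_mul]
  congr 1
  rw [Finset.sum_comm]
  refine Finset.sum_congr rfl fun j _ => Finset.sum_congr rfl fun l _ => by ring

lemma resid_orth {n p : ℕ} (V : Matrix (Fin n) (Fin p) ℝ) (a : Fin n → ℝ)
    (A : Matrix (Fin n) (Fin n) ℝ) (hu : IsUnit (Vᵀ * A * V).det) :
    Vᵀ *ᵥ (A *ᵥ (a - V *ᵥ ((Vᵀ * A * V)⁻¹ *ᵥ (Vᵀ *ᵥ (A *ᵥ a))))) = 0 := by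
  set M := Vᵀ * A * V with hM
  set x := M⁻¹ *ᵥ (Vᵀ *ᵥ (A *ᵥ a)) with hx
  have h1 : A *ᵥ (a - V *ᵥ x) = A *ᵥ a - A *ᵥ (V *ᵥ x) := by
    rw [Matrix.mulVec_sub]
  rw [h1, Matrix.mulVec_sub]
  have h2 : Vᵀ *ᵥ (A *ᵥ (V *ᵥ x)) = M *ᵥ x := by
    rw [hM, ← Matrix.mulVec_mulVec, ← Matrix.mulVec_mulVec]
  have h3 : M *ᵥ x = Vᵀ *ᵥ (A *ᵥ a) := by
    rw [hx, Matrix.mulVec_mulVec, Matrix.mul_nonsing_inv M hu, Matrix.one_mulVec]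
  rw [h2, h3, sub_self]

lemma resid_schur {n p : ℕ} (V : Matrix (Fin n) (Fin p) ℝ) (a : Fin n → ℝ)
    (A : Matrix (Fin n) (Fin n) ℝ) (hA : Aᵀ = A) (hu : IsUnit (Vᵀ * A * V).det) :
    a ⬝ᵥ (A *ᵥ a) - (Vᵀ *ᵥ (A *ᵥ a)) ⬝ᵥ ((Vᵀ * A * V)⁻¹ *ᵥ (Vᵀ *ᵥ (A *ᵥ a)))
      = (a - V *ᵥ ((Vᵀ * A * V)⁻¹ *ᵥ (Vᵀ *ᵥ (A *ᵥ a))))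
        ⬝ᵥ (A *ᵥ (a - V *ᵥ ((Vᵀ * A * V)⁻¹ *ᵥ (Vᵀ *ᵥ (A *ᵥ a))))) := by
  set M := Vᵀ * A * V with hM
  set x := M⁻¹ *ᵥ (Vᵀ *ᵥ (A *ᵥ a)) with hx
  set r := a - V *ᵥ x with hr
  have horth : Vᵀ *ᵥ (A *ᵥ r) = 0 := resid_orth V a A hu
  have h1 : r ⬝ᵥ (A *ᵥ r) = a ⬝ᵥ (A *ᵥ r) - x ⬝ᵥ (Vᵀ *ᵥ (A *ᵥ r)) := by
    rw [hr, sub_dotProduct]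
    congr 1
    rw [dotProduct_comm, Matrix.dotProduct_mulVec, ← Matrix.mulVec_transpose,
      dotProduct_comm]
  have h2 : a ⬝ᵥ (A *ᵥ r) = a ⬝ᵥ (A *ᵥ a) - (Vᵀ *ᵥ (A *ᵥ a)) ⬝ᵥ x := by
    rw [hr, Matrix.mulVec_sub, dotProduct_sub]
    congr 1
    rw [Matrix.dotProduct_mulVec (v := a) (A := A), ← Matrix.mulVec_transpose, hA]
    rw [Matrix.dotProduct_mulVec, ← Matrix.mulVec_transpose]
  rw [h1, horth, dotProduct_zero, sub_zero, h2]

lemma dot_mulVec_symm {n : ℕ} {S : Matrix (Fin n) (Fin n) ℝ} (hS : Sᵀ = S)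
    (v w : Fin n → ℝ) : v ⬝ᵥ (S *ᵥ w) = w ⬝ᵥ (S *ᵥ v) := by
  rw [Matrix.dotProduct_mulVec, ← Matrix.mulVec_transpose, hS, dotProduct_comm]

lemma range_dot {n p : ℕ} (V : Matrix (Fin n) (Fin p) ℝ) (d : Fin p → ℝ)
    (w : Fin n → ℝ) : (V *ᵥ d) ⬝ᵥ w = d ⬝ᵥ (Vᵀ *ᵥ w) := by
  rw [dotProduct_comm, Matrix.dotProduct_mulVec, ← Matrix.mulVec_transpose,
    dotProduct_comm]

lemma diff_identity {n p : ℕ} (V : Matrix (Fin n) (Fin p) ℝ)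
    (A Z : Matrix (Fin n) (Fin n) ℝ) (hA : Aᵀ = A) (hZ : Zᵀ = Z)
    (r1 r2 : Fin n → ℝ) (d : Fin p → ℝ)
    (hr1 : Vᵀ *ᵥ (A *ᵥ r1) = 0)
    (hr2 : Vᵀ *ᵥ ((A + Z) *ᵥ r2) = 0)
    (hd : r1 - r2 = V *ᵥ d) :
    r1 ⬝ᵥ (A *ᵥ r1) - r2 ⬝ᵥ ((A + Z) *ᵥ r2)
        = (r1 - r2) ⬝ᵥ ((A + Z) *ᵥ (r1 - r2)) - r1 ⬝ᵥ (Z *ᵥ r1)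
      ∧ (r1 - r2) ⬝ᵥ ((A + Z) *ᵥ (r1 - r2)) = (r1 - r2) ⬝ᵥ (Z *ᵥ r1) := by
  have hA' : (A + Z)ᵀ = A + Z := by rw [Matrix.transpose_add, hA, hZ]
  have hdot0 : ∀ w : Fin n → ℝ, Vᵀ *ᵥ w = 0 → (r1 - r2) ⬝ᵥ w = 0 := by
    intro w hw
    rw [hd, range_dot, hw, dotProduct_zero]
  have huA'r2 : (r1 - r2) ⬝ᵥ ((A + Z) *ᵥ r2) = 0 := hdot0 _ hr2
  have hr2A'u : r2 ⬝ᵥ ((A + Z) *ᵥ (r1 - r2)) = 0 := by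
    rw [dot_mulVec_symm hA', huA'r2]
  have huAr1 : (r1 - r2) ⬝ᵥ (A *ᵥ r1) = 0 := hdot0 _ hr1
  have hII : (r1 - r2) ⬝ᵥ ((A + Z) *ᵥ (r1 - r2)) = (r1 - r2) ⬝ᵥ (Z *ᵥ r1) := by
    have h0 : (r1 - r2) ⬝ᵥ ((A + Z) *ᵥ (r1 - r2))
        = (r1 - r2) ⬝ᵥ ((A + Z) *ᵥ r1) - (r1 - r2) ⬝ᵥ ((A + Z) *ᵥ r2) := by
      rw [Matrix.mulVec_sub, dotProduct_sub]
    rw [h0, huA'r2, sub_zero, Matrix.add_mulVec, dotProduct_add, huAr1, zero_add]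
  refine ⟨?_, hII⟩
  have hr1u : r1 = r2 + (r1 - r2) := by funext i; simp
  have hexp : r1 ⬝ᵥ ((A + Z) *ᵥ r1)
      = r2 ⬝ᵥ ((A + Z) *ᵥ r2) + (r1 - r2) ⬝ᵥ ((A + Z) *ᵥ (r1 - r2)) := by
    conv_lhs => rw [hr1u]
    rw [Matrix.mulVec_add, dotProduct_add, add_dotProduct,
      add_dotProduct, hr2A'u, huA'r2]
    ring
  have hAr1 : r1 ⬝ᵥ (A *ᵥ r1) = r1 ⬝ᵥ ((A + Z) *ᵥ r1) - r1 ⬝ᵥ (Z *ᵥ r1) := by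
    rw [Matrix.add_mulVec, dotProduct_add]
    ring
  rw [hAr1, hexp]
  ring

/-- stability of Symanzik rational fractions of order 2: with `v` a free
family of vectors (the columns of `V`), `a` independent from `v`, `W = V ⋆ (a)`,
`y(t)` positive weights, and `Z(t)` a bounded family of symmetric matrices such that
`Vᵀ(Y(t)+Z(t))V` is positive definite for large weights, there are constants `c, C > 0`
such that whenever all `yᵢ(t) ≥ C`,
`|det(WᵀY(t)W)/det(VᵀY(t)V) − det(Wᵀ(Y(t)+Z(t))W)/det(Vᵀ(Y(t)+Z(t))V)| ≤ c`. -/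
theorem stability_of_symanzik_ratios {n p : ℕ} {T : Type*}
    (V : Matrix (Fin n) (Fin p) ℝ) (a : Fin n → ℝ)
    (hV : LinearIndependent ℝ (fun j => Vᵀ j))
    (ha : a ∉ Submodule.span ℝ (Set.range fun j => Vᵀ j))
    (y : T → Fin n → ℝ) (hy : ∀ t i, 0 < y t i)
    (Z : T → Matrix (Fin n) (Fin n) ℝ)
    (hZsym : ∀ t, (Z t)ᵀ = Z t)
    (hZbdd : ∃ K : ℝ, ∀ t i j, |Z t i j| ≤ K)
    (hpos : ∃ C₀ : ℝ, ∀ t, (∀ i, C₀ ≤ y t i) →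
      (Vᵀ * (Matrix.diagonal (y t) + Z t) * V).PosDef) :
    ∃ c C : ℝ, 0 < c ∧ 0 < C ∧ ∀ t, (∀ i, C ≤ y t i) →
      |((snocCol V a)ᵀ * Matrix.diagonal (y t) * snocCol V a).det /
          (Vᵀ * Matrix.diagonal (y t) * V).det
        - ((snocCol V a)ᵀ * (Matrix.diagonal (y t) + Z t) * snocCol V a).det /
          (Vᵀ * (Matrix.diagonal (y t) + Z t) * V).det| ≤ c := by
  classical
  obtain ⟨K, hK⟩ := hZbdd
  obtain ⟨C₀, hC₀⟩ := hpos
  obtain ⟨K', hK'pos, hK'⟩ : ∃ K' : ℝ, 0 < K' ∧ ∀ t i j, |Z t i j| ≤ K' :=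
    ⟨|K| + 1, by positivity, fun t i j => (hK t i j).trans (by linarith [le_abs_self K])⟩
  obtain ⟨ρ, hρ0, hρbound⟩ : ∃ ρ : ℝ, 0 < ρ ∧ ∀ (w : Fin n → ℝ), (∀ i, 0 < w i) → ∀ i,
      |(a - V *ᵥ ((Vᵀ * Matrix.diagonal w * V)⁻¹
        *ᵥ (Vᵀ *ᵥ (Matrix.diagonal w *ᵥ a)))) i| ≤ ρ := by
    set κ : Fin p → ℝ := fun k => ∑ r : Fin p → Fin n,
        |((V.updateCol k a).submatrix r id).det| / |(V.submatrix r id).det| with hκdef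
    have hκ0 : ∀ k, 0 ≤ κ k := fun k =>
      Finset.sum_nonneg fun r _ => div_nonneg (abs_nonneg _) (abs_nonneg _)
    have hsum1 : (0:ℝ) ≤ ∑ i, |a i| := Finset.sum_nonneg fun i _ => abs_nonneg _
    have hsum2 : (0:ℝ) ≤ ∑ i, ∑ k, |V i k| * κ k :=
      Finset.sum_nonneg fun i _ => Finset.sum_nonneg fun k _ =>
        mul_nonneg (abs_nonneg _) (hκ0 k)
    refine ⟨(∑ i, |a i|) + (∑ i, ∑ k, |V i k| * κ k) + 1, by linarith, ?_⟩
    intro w hw i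
    have hMdet : 0 < (Vᵀ * Matrix.diagonal w * V).det := (gram_posdef V hV w hw).det_pos
    set x1 := (Vᵀ * Matrix.diagonal w * V)⁻¹ *ᵥ (Vᵀ *ᵥ (Matrix.diagonal w *ᵥ a)) with hx1
    have hxb : ∀ k, |x1 k| ≤ κ k := fun k => x_entry_bound V a w hw hMdet k
    have hVx : |(V *ᵥ x1) i| ≤ ∑ k, |V i k| * κ k := by
      calc |(V *ᵥ x1) i| = |∑ k, V i k * x1 k| := rfl
        _ ≤ ∑ k, |V i k * x1 k| := Finset.abs_sum_le_sum_abs _ _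
        _ ≤ ∑ k, |V i k| * κ k := Finset.sum_le_sum fun k _ => by
            rw [abs_mul]; exact mul_le_mul_of_nonneg_left (hxb k) (abs_nonneg _)
    have h1 : |a i| ≤ ∑ i', |a i'| :=
      Finset.single_le_sum (f := fun i' => |a i'|)
        (fun i' _ => abs_nonneg _) (Finset.mem_univ i)
    have h2 : ∑ k, |V i k| * κ k ≤ ∑ i', ∑ k, |V i' k| * κ k :=
      Finset.single_le_sum (f := fun i' => ∑ k, |V i' k| * κ k)
        (fun i' _ => Finset.sum_nonneg fun k _ => mul_nonneg (abs_nonneg _) (hκ0 k))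
        (Finset.mem_univ i)
    have h3 : |(a - V *ᵥ x1) i| ≤ |a i| + |(V *ᵥ x1) i| := by
      calc |(a - V *ᵥ x1) i| = |a i + -((V *ᵥ x1) i)| := by
            simp [sub_eq_add_neg]
        _ ≤ |a i| + |-((V *ᵥ x1) i)| := abs_add_le _ _
        _ = |a i| + |(V *ᵥ x1) i| := by rw [abs_neg]
    linarith
  have hn2 : (0:ℝ) ≤ (n:ℝ)^2 * K' * ρ^2 :=
    mul_nonneg (mul_nonneg (pow_nonneg (Nat.cast_nonneg n) 2) hK'pos.le) (sq_nonneg ρ)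
  have hn3 : (0:ℝ) ≤ (n:ℝ)^3 * K'^2 * ρ^2 :=
    mul_nonneg (mul_nonneg (pow_nonneg (Nat.cast_nonneg n) 3) (sq_nonneg K')) (sq_nonneg ρ)
  have hnK : (0:ℝ) < (n:ℝ) * K' + 1 := by
    have : (0:ℝ) ≤ (n:ℝ) * K' := mul_nonneg (Nat.cast_nonneg n) hK'pos.le
    linarith
  refine ⟨(n:ℝ)^2 * K' * ρ^2 + (n:ℝ)^3 * K'^2 * ρ^2 + 1,
    max C₀ ((n:ℝ) * K' + 1), by linarith, lt_of_lt_of_le hnK (le_max_right _ _), ?_⟩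
  intro t ht
  have hyt : ∀ i, 0 < y t i := hy t
  have hC1 : ∀ i, (n:ℝ) * K' + 1 ≤ y t i := fun i => le_trans (le_max_right _ _) (ht i)
  have hMpd := gram_posdef V hV (y t) hyt
  have hMdet : 0 < (Vᵀ * Matrix.diagonal (y t) * V).det := hMpd.det_pos
  have huM : IsUnit (Vᵀ * Matrix.diagonal (y t) * V).det :=
    isUnit_iff_ne_zero.mpr hMdet.ne'
  have hM'pd := hC₀ t (fun i => le_trans (le_max_left _ _) (ht i))
  have hM'det : 0 < (Vᵀ * (Matrix.diagonal (y t) + Z t) * V).det := hM'pd.det_pos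
  have huM' : IsUnit (Vᵀ * (Matrix.diagonal (y t) + Z t) * V).det :=
    isUnit_iff_ne_zero.mpr hM'det.ne'
  have hDsym : (Matrix.diagonal (y t))ᵀ = Matrix.diagonal (y t) :=
    Matrix.diagonal_transpose _
  have hA'sym : (Matrix.diagonal (y t) + Z t)ᵀ = Matrix.diagonal (y t) + Z t := by
    rw [Matrix.transpose_add, hDsym, hZsym t]
  rw [det_snoc_schur V a (Matrix.diagonal (y t)) hDsym huM,
    det_snoc_schur V a (Matrix.diagonal (y t) + Z t) hA'sym huM',
    mul_div_cancel_left₀ _ hMdet.ne', mul_div_cancel_left₀ _ hM'det.ne',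
    resid_schur V a _ hDsym huM, resid_schur V a _ hA'sym huM']
  set x1 := (Vᵀ * Matrix.diagonal (y t) * V)⁻¹ *ᵥ (Vᵀ *ᵥ (Matrix.diagonal (y t) *ᵥ a))
    with hx1def
  set x2 := (Vᵀ * (Matrix.diagonal (y t) + Z t) * V)⁻¹
      *ᵥ (Vᵀ *ᵥ ((Matrix.diagonal (y t) + Z t) *ᵥ a)) with hx2def
  set r1 := a - V *ᵥ x1 with hr1def
  set r2 := a - V *ᵥ x2 with hr2def
  have hd : r1 - r2 = V *ᵥ (x2 - x1) := by
    funext i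
    simp only [hr1def, hr2def, Pi.sub_apply, Matrix.mulVec_sub]
    ring
  obtain ⟨hI, hII⟩ := diff_identity V (Matrix.diagonal (y t)) (Z t) hDsym (hZsym t)
    r1 r2 (x2 - x1) (resid_orth V a _ huM) (resid_orth V a _ huM') hd
  rw [hI]
  have hr1b : ∀ i, |r1 i| ≤ ρ := fun i => hρbound (y t) hyt i
  have hZr1 : ∀ i, |(Z t *ᵥ r1) i| ≤ (n:ℝ) * K' * ρ := by
    intro i
    calc |(Z t *ᵥ r1) i| = |∑ j, Z t i j * r1 j| := rfl
      _ ≤ ∑ j, |Z t i j * r1 j| := Finset.abs_sum_le_sum_abs _ _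
      _ ≤ ∑ _j : Fin n, K' * ρ := Finset.sum_le_sum fun j _ => by
          rw [abs_mul]
          exact mul_le_mul (hK' t i j) (hr1b j) (abs_nonneg _) hK'pos.le
      _ = (n:ℝ) * K' * ρ := by
          rw [Finset.sum_const, Finset.card_univ, Fintype.card_fin, nsmul_eq_mul]; ring
  have hterm1 : |r1 ⬝ᵥ (Z t *ᵥ r1)| ≤ (n:ℝ)^2 * K' * ρ^2 := by
    calc |r1 ⬝ᵥ (Z t *ᵥ r1)| = |∑ i, r1 i * (Z t *ᵥ r1) i| := rfl
      _ ≤ ∑ i, |r1 i * (Z t *ᵥ r1) i| := Finset.abs_sum_le_sum_abs _ _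
      _ ≤ ∑ _i : Fin n, ρ * ((n:ℝ) * K' * ρ) := Finset.sum_le_sum fun i _ => by
          rw [abs_mul]
          exact mul_le_mul (hr1b i) (hZr1 i) (abs_nonneg _) hρ0.le
      _ = (n:ℝ)^2 * K' * ρ^2 := by
          rw [Finset.sum_const, Finset.card_univ, Fintype.card_fin, nsmul_eq_mul]; ring
  have hS : ∑ i, ((Z t *ᵥ r1) i)^2 ≤ (n:ℝ)^3 * K'^2 * ρ^2 := by
    calc ∑ i, ((Z t *ᵥ r1) i)^2 ≤ ∑ _i : Fin n, ((n:ℝ) * K' * ρ)^2 :=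
        Finset.sum_le_sum fun i _ => by
          rw [← sq_abs]
          exact pow_le_pow_left₀ (abs_nonneg _) (hZr1 i) 2
      _ = (n:ℝ)^3 * K'^2 * ρ^2 := by
          rw [Finset.sum_const, Finset.card_univ, Fintype.card_fin, nsmul_eq_mul]; ring
  set u := r1 - r2 with hudef
  -- lower bound for the quadratic form
  have hDu : u ⬝ᵥ (Matrix.diagonal (y t) *ᵥ u) = ∑ i, y t i * u i^2 := by
    simp only [dotProduct, Matrix.mulVec_diagonal]
    exact Finset.sum_congr rfl fun i _ => by ring
  have hDu_ge : (∑ i, u i^2) * ((n:ℝ)*K' + 1) ≤ u ⬝ᵥ (Matrix.diagonal (y t) *ᵥ u) := by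
    rw [hDu, Finset.sum_mul]
    exact Finset.sum_le_sum fun i _ => by nlinarith [sq_nonneg (u i), hC1 i]
  have habsu : (∑ i, |u i|)^2 ≤ (n:ℝ) * ∑ i, u i^2 := by
    have h := sq_sum_le_card_mul_sum_sq (s := (Finset.univ : Finset (Fin n)))
      (f := fun i => |u i|)
    simp only [Finset.card_univ, Fintype.card_fin, sq_abs] at h
    exact_mod_cast h
  have hZu : |u ⬝ᵥ (Z t *ᵥ u)| ≤ (n:ℝ) * K' * ∑ i, u i^2 := by
    have step : |u ⬝ᵥ (Z t *ᵥ u)| ≤ K' * (∑ i, |u i|)^2 := by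
      calc |u ⬝ᵥ (Z t *ᵥ u)| = |∑ i, u i * (Z t *ᵥ u) i| := rfl
        _ ≤ ∑ i, |u i * (Z t *ᵥ u) i| := Finset.abs_sum_le_sum_abs _ _
        _ ≤ ∑ i, |u i| * (K' * ∑ j, |u j|) := Finset.sum_le_sum fun i _ => by
            rw [abs_mul]
            refine mul_le_mul_of_nonneg_left ?_ (abs_nonneg _)
            calc |(Z t *ᵥ u) i| = |∑ j, Z t i j * u j| := rfl
              _ ≤ ∑ j, |Z t i j * u j| := Finset.abs_sum_le_sum_abs _ _
              _ ≤ ∑ j, K' * |u j| := Finset.sum_le_sum fun j _ => by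
                  rw [abs_mul]
                  exact mul_le_mul_of_nonneg_right (hK' t i j) (abs_nonneg _)
              _ = K' * ∑ j, |u j| := by rw [Finset.mul_sum]
        _ = K' * (∑ i, |u i|)^2 := by rw [← Finset.sum_mul]; ring
    calc |u ⬝ᵥ (Z t *ᵥ u)| ≤ K' * (∑ i, |u i|)^2 := step
      _ ≤ K' * ((n:ℝ) * ∑ i, u i^2) := mul_le_mul_of_nonneg_left habsu hK'pos.le
      _ = (n:ℝ) * K' * ∑ i, u i^2 := by ring
  have hsq : (0:ℝ) ≤ ∑ i, u i^2 := Finset.sum_nonneg fun i _ => sq_nonneg _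
  have ht0lb : (∑ i, u i^2) ≤ u ⬝ᵥ ((Matrix.diagonal (y t) + Z t) *ᵥ u) := by
    have hsplit : u ⬝ᵥ ((Matrix.diagonal (y t) + Z t) *ᵥ u)
        = u ⬝ᵥ (Matrix.diagonal (y t) *ᵥ u) + u ⬝ᵥ (Z t *ᵥ u) := by
      rw [Matrix.add_mulVec, dotProduct_add]
    rw [hsplit]
    have := neg_abs_le (u ⬝ᵥ (Z t *ᵥ u))
    nlinarith [hZu, hDu_ge]
  have ht0pos : (0:ℝ) ≤ u ⬝ᵥ ((Matrix.diagonal (y t) + Z t) *ᵥ u) := le_trans hsq ht0lb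
  have hCS : (u ⬝ᵥ ((Matrix.diagonal (y t) + Z t) *ᵥ u))^2
      ≤ (∑ i, u i^2) * (∑ i, ((Z t *ᵥ r1) i)^2) := by
    rw [hII]
    exact Finset.sum_mul_sq_le_sq_mul_sq Finset.univ u (fun i => (Z t *ᵥ r1) i)
  have hSnn : (0:ℝ) ≤ ∑ i, ((Z t *ᵥ r1) i)^2 := Finset.sum_nonneg fun i _ => sq_nonneg _
  have ht0ub : u ⬝ᵥ ((Matrix.diagonal (y t) + Z t) *ᵥ u) ≤ (n:ℝ)^3 * K'^2 * ρ^2 := by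
    rcases eq_or_lt_of_le ht0pos with h0 | h0
    · rw [← h0]; linarith
    · have h1 : (u ⬝ᵥ ((Matrix.diagonal (y t) + Z t) *ᵥ u))^2
          ≤ (u ⬝ᵥ ((Matrix.diagonal (y t) + Z t) *ᵥ u)) * ∑ i, ((Z t *ᵥ r1) i)^2 :=
        hCS.trans (mul_le_mul_of_nonneg_right ht0lb hSnn)
      have h2 : u ⬝ᵥ ((Matrix.diagonal (y t) + Z t) *ᵥ u) ≤ ∑ i, ((Z t *ᵥ r1) i)^2 := by
        rw [sq] at h1
        exact le_of_mul_le_mul_left h1 h0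
      exact h2.trans hS
  calc |u ⬝ᵥ ((Matrix.diagonal (y t) + Z t) *ᵥ u) - r1 ⬝ᵥ (Z t *ᵥ r1)|
      ≤ |u ⬝ᵥ ((Matrix.diagonal (y t) + Z t) *ᵥ u)| + |r1 ⬝ᵥ (Z t *ᵥ r1)| := by
        rw [sub_eq_add_neg]
        exact (abs_add_le _ _).trans_eq (by rw [abs_neg])
    _ = u ⬝ᵥ ((Matrix.diagonal (y t) + Z t) *ᵥ u) + |r1 ⬝ᵥ (Z t *ᵥ r1)| := by
        rw [abs_of_nonneg ht0pos]
    _ ≤ (n:ℝ)^2 * K' * ρ^2 + (n:ℝ)^3 * K'^2 * ρ^2 + 1 := by linarith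
end
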